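/- arXiv:2104.02582 — 5 statements merged into one kernel-verified Lean document; each statement's English description precedes it below -/
import Mathlib

section
/- There exists N such that for every integer n ≥ N, the Mahler measure of the polynomial f_n(x) = x³ + n·x² − (n+3)·x + 1 satisfies M(f_n)² < 2·(n² + 3n + 9); in particular M(f_n) < n + 2 + 2/n + 1/n². -/
open Polynomial

/-- The Mahler measure of a complex polynomial `f = c ∏ (X - αᵢ)`:
`M(f) = |c| ∏_{|αᵢ| ≥ 1} |αᵢ|`. -/
noncomputable def mahlerMeasure (f : Polynomial ℂ) : ℝ :=
  ‖f.leadingCoeff‖ * ((f.roots).map (fun z => max 1 ‖z‖)).prod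

/-- The 'simplest cubic' polynomial `fₙ(x) = x³ + n·x² − (n+3)·x + 1`, over `ℂ`. -/
noncomputable def simplestCubic (n : ℤ) : Polynomial ℂ :=
  X ^ 3 + C (n : ℂ) * X ^ 2 - C ((n : ℂ) + 3) * X + C 1

set_option maxHeartbeats 2000000 in
/-- There exists `N` such that for all integers `n ≥ N`,
`M(fₙ)² < 2·(n² + 3n + 9)`; in particular `M(fₙ) < n + 2 + 2/n + 1/n²`. -/
theorem stmt6 : ∃ N : ℤ, ∀ n : ℤ, N ≤ n →
    _root_.mahlerMeasure (simplestCubic n) ^ 2 < 2 * ((n : ℝ) ^ 2 + 3 * (n : ℝ) + 9) ∧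
    _root_.mahlerMeasure (simplestCubic n) < (n : ℝ) + 2 + 2 / (n : ℝ) + 1 / (n : ℝ) ^ 2 := by
  refine ⟨10, fun n hn => ?_⟩
  have hx : (10:ℝ) ≤ (n:ℝ) := by exact_mod_cast hn
  set x : ℝ := (n:ℝ) with hxdef
  have hx0 : (0:ℝ) < x := by linarith
  have hxne : x ≠ 0 := ne_of_gt hx0
  set t : ℝ := x + 2 + 2/x + 1/x^2 with htdef
  have h2x : 0 < 2/x := by positivity
  have h1x2 : 0 < 1/x^2 := by positivity
  have ht1 : 1 < t := by rw [htdef]; nlinarith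
  have ht0 : 0 < t := by linarith
  have htne : t ≠ 0 := ne_of_gt ht0
  set F : ℝ → ℝ := fun y => y^3 + x*y^2 - (x+3)*y + 1 with hFdef
  have hFc : Continuous F := by rw [hFdef]; continuity
  -- value at 1/t
  have hkey : 0 < t^3 - (x+3)*t^2 + x*t + 1 := by
    have hexp : t^3 - (x+3)*t^2 + x*t + 1
        = (4*x^6+11*x^5+20*x^4+22*x^3+15*x^2+6*x+1)/x^6 := by
      rw [htdef]; field_simp; ring
    rw [hexp]; positivity
  have hFt : 0 < F (1/t) := by
    have : F (1/t) = (t^3 - (x+3)*t^2 + x*t + 1)/t^3 := by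
      rw [hFdef]; field_simp; ring
    rw [this]; positivity
  have hF1 : F 1 = -1 := by rw [hFdef]; ring
  have hF2 : F 2 = 2*x + 3 := by rw [hFdef]; ring
  have hFa : F (-(x+2)) = -(x^2+3*x+1) := by rw [hFdef]; ring
  have hFb : F (-(x+1)) = 2*x + 3 := by rw [hFdef]; ring
  -- root γ in (1/t, 1)
  have h1t1 : (1:ℝ)/t ≤ 1 := by
    rw [div_le_one ht0]; linarith
  have h0γ : (0:ℝ) ∈ Set.Icc (F 1) (F (1/t)) := by
    rw [hF1]; exact ⟨by norm_num, le_of_lt hFt⟩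
  obtain ⟨γ, hγmem, hγ0⟩ := intermediate_value_Icc' h1t1 hFc.continuousOn h0γ
  have hγlt : 1/t < γ := lt_of_le_of_ne hγmem.1 (by rintro rfl; exact absurd hγ0 (ne_of_gt hFt))
  have hγlt1 : γ < 1 := lt_of_le_of_ne hγmem.2 (by rintro rfl; rw [hF1] at hγ0; norm_num at hγ0)
  have hγpos : 0 < γ := lt_trans (by positivity) hγlt
  -- root β in [-(x+2), -(x+1)]
  have h0β : (0:ℝ) ∈ Set.Icc (F (-(x+2))) (F (-(x+1))) := by
    rw [hFa, hFb]; exact ⟨by nlinarith, by linarith⟩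
  obtain ⟨β, hβmem, hβ0⟩ := intermediate_value_Icc (by linarith : -(x+2) ≤ -(x+1))
    hFc.continuousOn h0β
  have hβneg : β ≤ -(x+1) := hβmem.2
  -- root δ in [1, 2]
  have h0δ : (0:ℝ) ∈ Set.Icc (F 1) (F 2) := by
    rw [hF1, hF2]; exact ⟨by norm_num, by linarith⟩
  obtain ⟨δ, hδmem, hδ0⟩ := intermediate_value_Icc (by norm_num : (1:ℝ) ≤ 2)
    hFc.continuousOn h0δ
  have hδ1 : 1 ≤ δ := hδmem.1
  have hδne1 : δ ≠ 1 := by rintro rfl; rw [hF1] at hδ0; norm_num at hδ0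
  have hδgt1 : 1 < δ := lt_of_le_of_ne hδ1 (Ne.symm hδne1)
  -- basic polynomial facts
  have hmonic : (simplestCubic n).Monic := by unfold simplestCubic; monicity!
  have hdeg : (simplestCubic n).natDegree = 3 := by unfold simplestCubic; compute_degree!
  have heval : ∀ z : ℂ, (simplestCubic n).eval z = z^3 + n*z^2 - ((n:ℂ)+3)*z + 1 := by
    intro z; simp [simplestCubic]
  have hroot : ∀ y : ℝ, F y = 0 → (simplestCubic n).IsRoot (y:ℂ) := by
    intro y hy
    have hy' : y^3 + x*y^2 - (x+3)*y + 1 = 0 := hy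
    rw [IsRoot, heval]
    rw [hxdef] at hy'
    exact_mod_cast congrArg (fun r : ℝ => (r : ℂ)) hy'
  have hra : (simplestCubic n).IsRoot (β:ℂ) := hroot β hβ0
  have hrb : (simplestCubic n).IsRoot (γ:ℂ) := hroot γ hγ0
  have hrc : (simplestCubic n).IsRoot (δ:ℂ) := hroot δ hδ0
  have hne0 : simplestCubic n ≠ 0 := hmonic.ne_zero
  have hβγ : β ≠ γ := by intro h; rw [h] at hβneg; linarith
  have hβδ : β ≠ δ := by intro h; rw [h] at hβneg; linarith
  have hγδ : γ ≠ δ := by intro h; rw [h] at hγlt1; linarith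
  have hβγ' : (β:ℂ) ≠ (γ:ℂ) := by exact_mod_cast hβγ
  have hβδ' : (β:ℂ) ≠ (δ:ℂ) := by exact_mod_cast hβδ
  have hγδ' : (γ:ℂ) ≠ (δ:ℂ) := by exact_mod_cast hγδ
  have hsplits : Splits (simplestCubic n) := IsAlgClosed.splits _
  have hcard : Multiset.card (simplestCubic n).roots = 3 :=
    (splits_iff_card_roots.mp hsplits).trans hdeg
  have hmem : ∀ z : ℂ, (simplestCubic n).IsRoot z → z ∈ (simplestCubic n).roots := by
    intro z hz; exact (mem_roots hne0).mpr hz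
  have hle : ({(β:ℂ), (γ:ℂ), (δ:ℂ)} : Multiset ℂ) ≤ (simplestCubic n).roots := by
    rw [Multiset.le_iff_count]
    intro z
    simp only [Multiset.insert_eq_cons, Multiset.count_cons, Multiset.count_singleton]
    by_cases h1 : z = (β:ℂ)
    · subst h1
      rw [if_neg hβδ', if_neg hβγ']
      simpa using Multiset.one_le_count_iff_mem.mpr (hmem _ hra)
    · by_cases h2 : z = (γ:ℂ)
      · subst h2
        rw [if_neg hγδ', if_pos rfl, if_neg h1]
        simpa using Multiset.one_le_count_iff_mem.mpr (hmem _ hrb)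
      · by_cases h3 : z = (δ:ℂ)
        · subst h3
          rw [if_pos rfl, if_neg h2, if_neg h1]
          simpa using Multiset.one_le_count_iff_mem.mpr (hmem _ hrc)
        · rw [if_neg h3, if_neg h2, if_neg h1]; simp
  have hroots : (simplestCubic n).roots = {(β:ℂ), (γ:ℂ), (δ:ℂ)} :=
    (Multiset.eq_of_le_of_card_le hle (by simp [hcard])).symm
  -- Vieta: βγδ = -1
  have hprod := hsplits.eq_prod_roots_of_monic hmonic
  have hvieta : β * γ * δ = -1 := by
    have h0 := congrArg (Polynomial.eval 0) hprod
    rw [hroots, heval 0] at h0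
    simp [eval_multiset_prod, Multiset.map_cons, Multiset.prod_cons] at h0
    have : ((β:ℂ)) * γ * δ = -1 := by linear_combination h0
    exact_mod_cast this
  -- Mahler measure
  have hnormβ : ‖(β:ℂ)‖ = -β := by
    rw [Complex.norm_real, Real.norm_eq_abs, abs_of_nonpos (by linarith)]
  have hnormγ : ‖(γ:ℂ)‖ = γ := by
    rw [Complex.norm_real, Real.norm_eq_abs, abs_of_nonneg (le_of_lt hγpos)]
  have hnormδ : ‖(δ:ℂ)‖ = δ := by
    rw [Complex.norm_real, Real.norm_eq_abs, abs_of_nonneg (by linarith)]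
  have hM : _root_.mahlerMeasure (simplestCubic n) = 1/γ := by
    rw [_root_.mahlerMeasure, hroots, hmonic.leadingCoeff]
    simp only [Multiset.insert_eq_cons, Multiset.map_cons, Multiset.map_singleton,
      Multiset.prod_cons, Multiset.prod_singleton, hnormβ, hnormγ, hnormδ, norm_one, one_mul]
    rw [max_eq_right (by linarith : (1:ℝ) ≤ -β), max_eq_left (le_of_lt hγlt1),
      max_eq_right hδ1]
    rw [eq_div_iff (ne_of_gt hγpos)]
    linear_combination -hvieta
  have hMlt : _root_.mahlerMeasure (simplestCubic n) < t := by
    rw [hM]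
    rw [div_lt_iff₀ hγpos]
    have h1 : 1 < γ * t := (div_lt_iff₀ ht0).mp hγlt
    have h2 : γ * t = t * γ := mul_comm γ t
    linarith
  have hMpos : 0 < _root_.mahlerMeasure (simplestCubic n) := by rw [hM]; positivity
  constructor
  · have h2 : 2/x ≤ 1/2 := by rw [div_le_div_iff₀ hx0 (by norm_num : (0:ℝ) < 2)]; linarith
    have h3 : 1/x^2 ≤ 1/2 := by
      rw [div_le_div_iff₀ (by positivity) (by norm_num : (0:ℝ) < 2)]; nlinarith
    have htle : t ≤ x + 3 := by rw [htdef]; linarith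
    have hMt : _root_.mahlerMeasure (simplestCubic n) < x + 3 := lt_of_lt_of_le hMlt htle
    nlinarith [hMt, hMpos]
  · exact hMlt
end

section
/- For every integer n > 6, the polynomial g_n(x) = x³ − n·x² + n has three real roots r₁ < r₂ < r₃ satisfying −1 < r₁ < −1 + 1/n, 1 < r₂ < 1 + 1/n, and n − 2/n < r₃ < n; consequently the Mahler measure satisfies M(g_n) < n + 1. -/
open Polynomial

/-- For every integer `n > 6`, `gₙ(x) = x³ − n·x² + n` has three real roots
`r₁ < r₂ < r₃` with `−1 < r₁ < −1 + 1/n`, `1 < r₂ < 1 + 1/n`, `n − 2/n < r₃ < n`;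
consequently `M(gₙ) < n + 1`. -/
theorem stmt7 (n : ℤ) (hn : 6 < n) :
    ∃ r₁ r₂ r₃ : ℝ, r₁ < r₂ ∧ r₂ < r₃ ∧
      (∀ x : ℝ, x ^ 3 - (n : ℝ) * x ^ 2 + (n : ℝ) = (x - r₁) * (x - r₂) * (x - r₃)) ∧
      -1 < r₁ ∧ r₁ < -1 + 1 / (n : ℝ) ∧
      1 < r₂ ∧ r₂ < 1 + 1 / (n : ℝ) ∧
      (n : ℝ) - 2 / (n : ℝ) < r₃ ∧ r₃ < (n : ℝ) ∧
      _root_.mahlerMeasure (X ^ 3 - C (n : ℂ) * X ^ 2 + C (n : ℂ)) < (n : ℝ) + 1 := by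
  have hn7 : (7:ℝ) ≤ (n:ℝ) := by exact_mod_cast hn
  have hnpos : (0:ℝ) < n := by linarith
  set f : ℝ → ℝ := fun x => x ^ 3 - (n : ℝ) * x ^ 2 + (n : ℝ) with hf
  have hcont : Continuous f := by fun_prop
  -- sign values
  have hva : f (-1) < 0 := by simp only [hf]; nlinarith
  have hvb : 0 < f (-1 + 1/(n:ℝ)) := by
    simp only [hf]
    have h : (-1 + 1/(n:ℝ))^3 - n*(-1 + 1/(n:ℝ))^2 + n = ((n:ℝ)^3+2*n^2-3*n+1)/n^3 := by
      field_simp; ring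
    rw [h]
    apply div_pos (by nlinarith) (by positivity)
  have hvc : (0:ℝ) < f 1 := by simp only [hf]; nlinarith
  have hvd : f (1 + 1/(n:ℝ)) < 0 := by
    simp only [hf]
    have h : (1 + 1/(n:ℝ))^3 - n*(1 + 1/(n:ℝ))^2 + n = (-(n:ℝ)^3+2*n^2+3*n+1)/n^3 := by
      field_simp; ring
    rw [h]
    apply div_neg_of_neg_of_pos (by nlinarith) (by positivity)
  have hve : f ((n:ℝ) - 2/(n:ℝ)) < 0 := by
    simp only [hf]
    have h : ((n:ℝ) - 2/(n:ℝ))^3 - n*((n:ℝ) - 2/(n:ℝ))^2 + n = (-(n:ℝ)^4+8*n^2-8)/n^3 := by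
      field_simp; ring
    rw [h]
    apply div_neg_of_neg_of_pos (by nlinarith [sq_nonneg ((n:ℝ)^2-8), sq_nonneg ((n:ℝ)-7)]) (by positivity)
  have hvf : (0:ℝ) < f n := by simp only [hf]; nlinarith
  -- IVT
  have hinv : (0:ℝ) < 1/(n:ℝ) := by positivity
  have hin : (1:ℝ)/(n:ℝ) ≤ 1/7 := by
    apply div_le_div_of_nonneg_left (by norm_num) (by norm_num) hn7
  obtain ⟨r₁, hr1mem, hr1⟩ := intermediate_value_Ioo (by linarith : (-1:ℝ) ≤ -1 + 1/(n:ℝ))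
    hcont.continuousOn (Set.mem_Ioo.mpr ⟨hva, hvb⟩)
  obtain ⟨r₂, hr2mem, hr2⟩ := intermediate_value_Ioo' (by linarith : (1:ℝ) ≤ 1 + 1/(n:ℝ))
    hcont.continuousOn (Set.mem_Ioo.mpr ⟨hvd, hvc⟩)
  obtain ⟨r₃, hr3mem, hr3⟩ := intermediate_value_Ioo (by nlinarith [div_pos (by norm_num : (0:ℝ)<2) hnpos] : (n:ℝ) - 2/(n:ℝ) ≤ n)
    hcont.continuousOn (Set.mem_Ioo.mpr ⟨hve, hvf⟩)
  obtain ⟨hr1a, hr1b⟩ := hr1mem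
  obtain ⟨hr2a, hr2b⟩ := hr2mem
  obtain ⟨hr3a, hr3b⟩ := hr3mem
  simp only [hf] at hr1 hr2 hr3
  -- ordering
  have h2in : (0:ℝ) < 2/(n:ℝ) ∧ (2:ℝ)/(n:ℝ) ≤ 2/7 := by
    constructor
    · positivity
    · apply div_le_div_of_nonneg_left (by norm_num) (by norm_num) hn7
  have hlt12 : r₁ < r₂ := by linarith
  have hlt23 : r₂ < r₃ := by linarith [h2in.1, h2in.2]
  have hlt13 : r₁ < r₃ := lt_trans hlt12 hlt23
  -- Vieta
  have h12 : r₁^2 + r₁*r₂ + r₂^2 = n*(r₁+r₂) := by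
    have h0 : (r₁ - r₂) * (r₁^2 + r₁*r₂ + r₂^2 - n*(r₁+r₂)) = 0 := by
      linear_combination hr1 - hr2
    rcases mul_eq_zero.mp h0 with h | h
    · exact absurd h (sub_ne_zero.mpr hlt12.ne)
    · linarith [sub_eq_zero.mp h]
  have h13 : r₁^2 + r₁*r₃ + r₃^2 = n*(r₁+r₃) := by
    have h0 : (r₁ - r₃) * (r₁^2 + r₁*r₃ + r₃^2 - n*(r₁+r₃)) = 0 := by
      linear_combination hr1 - hr3
    rcases mul_eq_zero.mp h0 with h | h
    · exact absurd h (sub_ne_zero.mpr hlt13.ne)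
    · linarith [sub_eq_zero.mp h]
  have hs : r₁ + r₂ + r₃ = n := by
    have h0 : (r₂ - r₃) * (r₁ + r₂ + r₃ - n) = 0 := by
      linear_combination h12 - h13
    rcases mul_eq_zero.mp h0 with h | h
    · exact absurd h (sub_ne_zero.mpr hlt23.ne)
    · linarith [sub_eq_zero.mp h]
  have he2 : r₁*r₂ + r₁*r₃ + r₂*r₃ = 0 := by
    linear_combination (-1)*h12 + (r₁+r₂)*hs
  have he3 : r₁*r₂*r₃ = -(n:ℝ) := by
    linear_combination hr1 - r₁^2*hs + r₁*he2
  have hfac : ∀ x : ℝ, x ^ 3 - (n : ℝ) * x ^ 2 + (n : ℝ) = (x - r₁) * (x - r₂) * (x - r₃) := by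
    intro x
    linear_combination x^2*hs - x*he2 + he3
  -- complex factorization
  have c1 : C ((r₁:ℂ)) + C ((r₂:ℂ)) + C ((r₃:ℂ)) = C ((n:ℂ)) := by
    rw [← map_add, ← map_add]
    congr 1
    exact_mod_cast congrArg (fun t : ℝ => (t : ℂ)) hs
  have c2 : C ((r₁:ℂ)) * C ((r₂:ℂ)) + C ((r₁:ℂ)) * C ((r₃:ℂ)) + C ((r₂:ℂ)) * C ((r₃:ℂ)) = 0 := by
    rw [← map_mul, ← map_mul, ← map_mul, ← map_add, ← map_add]
    have : ((r₁:ℂ))*r₂ + (r₁:ℂ)*r₃ + (r₂:ℂ)*r₃ = 0 := by exact_mod_cast congrArg (fun t : ℝ => (t : ℂ)) he2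
    rw [this, map_zero]
  have c3 : C ((r₁:ℂ)) * C ((r₂:ℂ)) * C ((r₃:ℂ)) = -C ((n:ℂ)) := by
    rw [← map_mul, ← map_mul, ← map_neg]
    congr 1
    exact_mod_cast congrArg (fun t : ℝ => (t : ℂ)) he3
  have key : (X ^ 3 - C (n : ℂ) * X ^ 2 + C (n : ℂ) : Polynomial ℂ)
      = (X - C ((r₁:ℂ))) * (X - C ((r₂:ℂ))) * (X - C ((r₃:ℂ))) := by
    linear_combination (X^2 : Polynomial ℂ)*c1 - (X : Polynomial ℂ)*c2 + c3
  have hmon : (X ^ 3 - C (n : ℂ) * X ^ 2 + C (n : ℂ) : Polynomial ℂ).Monic := by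
    rw [key]
    exact ((monic_X_sub_C _).mul (monic_X_sub_C _)).mul (monic_X_sub_C _)
  have hroots : (X ^ 3 - C (n : ℂ) * X ^ 2 + C (n : ℂ) : Polynomial ℂ).roots
      = {(r₁:ℂ), (r₂:ℂ), (r₃:ℂ)} := by
    rw [key, roots_mul (mul_ne_zero (mul_ne_zero (X_sub_C_ne_zero _) (X_sub_C_ne_zero _)) (X_sub_C_ne_zero _)),
      roots_mul (mul_ne_zero (X_sub_C_ne_zero _) (X_sub_C_ne_zero _)),
      roots_X_sub_C, roots_X_sub_C, roots_X_sub_C]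
    rfl
  have hmm : _root_.mahlerMeasure (X ^ 3 - C (n : ℂ) * X ^ 2 + C (n : ℂ))
      = (max 1 |r₁|) * ((max 1 |r₂|) * ((max 1 |r₃|) * 1)) := by
    rw [_root_.mahlerMeasure, hmon.leadingCoeff, hroots]
    simp [Complex.norm_real, Real.norm_eq_abs]
  have habs1 : max 1 |r₁| = 1 := max_eq_left (abs_le.mpr ⟨by linarith, by linarith⟩)
  have habs2 : max 1 |r₂| = r₂ := by
    rw [abs_of_pos (by linarith)]; exact max_eq_right (by linarith)
  have habs3 : max 1 |r₃| = r₃ := by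
    rw [abs_of_pos (by linarith [h2in.1, h2in.2])]
    exact max_eq_right (by linarith [h2in.1, h2in.2])
  have hbound : _root_.mahlerMeasure (X ^ 3 - C (n : ℂ) * X ^ 2 + C (n : ℂ)) < (n : ℝ) + 1 := by
    rw [hmm, habs1, habs2, habs3]
    have h1 : r₂ * r₃ < (1 + 1/(n:ℝ)) * (n:ℝ) := by
      apply mul_lt_mul' (le_of_lt hr2b) hr3b (by linarith [h2in.1, h2in.2]) (by linarith)
    have h2 : (1 + 1/(n:ℝ)) * (n:ℝ) = (n:ℝ) + 1 := by
      rw [add_mul, one_mul, one_div, inv_mul_cancel₀ hnpos.ne']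
    rw [one_mul, mul_one, ← h2]
    exact h1
  exact ⟨r₁, r₂, r₃, hlt12, hlt23, hfac, hr1a, hr1b, hr2a, hr2b, hr3a, hr3b, hbound⟩
end

section
/- There exists N such that for every integer n ≥ N, the polynomial h_n(x) = x³ + n·x² + n has exactly one real root r and a pair of complex conjugate non-real roots τ, τ̄, and these satisfy: −n − 1/n < r < −n, the modulus |τ| < 1, and 0 < Re(τ) < 1/(2n); consequently the Mahler measure of h_n equals |r| and satisfies n < M(h_n) < n + 1/n, and M(h_n)⁴ < (1/4)·n²·(4n² + 27). -/
open Polynomial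

set_option maxHeartbeats 1000000 in
/-- There exists `N` such that for every integer `n ≥ N`, `hₙ(x) = x³ + n·x² + n` has
exactly one real root `r` and a conjugate pair of non-real roots `τ, τ̄`, with
`−n − 1/n < r < −n`, `|τ| < 1`, `0 < Re τ < 1/(2n)`; consequently `M(hₙ) = |r|`,
`n < M(hₙ) < n + 1/n`, and `M(hₙ)⁴ < (1/4)·n²·(4n² + 27)`. -/
theorem stmt9 : ∃ N : ℤ, ∀ n : ℤ, N ≤ n →
    ∃ (r : ℝ) (τ : ℂ), τ.im ≠ 0 ∧
      (∀ z : ℂ, z ^ 3 + (n : ℂ) * z ^ 2 + (n : ℂ) =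
        (z - (r : ℂ)) * (z - τ) * (z - (starRingEnd ℂ) τ)) ∧
      -(n : ℝ) - 1 / (n : ℝ) < r ∧ r < -(n : ℝ) ∧
      ‖τ‖ < 1 ∧
      0 < τ.re ∧ τ.re < 1 / (2 * (n : ℝ)) ∧
      _root_.mahlerMeasure (X ^ 3 + C (n : ℂ) * X ^ 2 + C (n : ℂ)) = |r| ∧
      (n : ℝ) < _root_.mahlerMeasure (X ^ 3 + C (n : ℂ) * X ^ 2 + C (n : ℂ)) ∧
      _root_.mahlerMeasure (X ^ 3 + C (n : ℂ) * X ^ 2 + C (n : ℂ)) < (n : ℝ) + 1 / (n : ℝ) ∧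
      _root_.mahlerMeasure (X ^ 3 + C (n : ℂ) * X ^ 2 + C (n : ℂ)) ^ 4 <
        (1/4 : ℝ) * (n : ℝ) ^ 2 * (4 * (n : ℝ) ^ 2 + 27) := by
  refine ⟨2, fun n hn => ?_⟩
  have hn2 : (2:ℝ) ≤ (n:ℝ) := by exact_mod_cast hn
  have hnpos : (0:ℝ) < n := by linarith
  -- the real root
  have hcont : ContinuousOn (fun x : ℝ => x^3 + n*x^2 + n) (Set.Icc (-(n:ℝ)-1/n) (-(n:ℝ))) := by
    fun_prop
  have hinv : (0:ℝ) < 1/n := by positivity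
  have hle : -(n:ℝ)-1/n ≤ -(n:ℝ) := by linarith
  have hfa : (-(n:ℝ)-1/n)^3 + n*(-(n:ℝ)-1/n)^2 + n = -(2/(n:ℝ) + 1/(n:ℝ)^3) := by
    field_simp
    ring
  have h0 : (0:ℝ) ∈ Set.Ioo ((fun x : ℝ => x^3 + n*x^2 + n) (-(n:ℝ)-1/n))
      ((fun x : ℝ => x^3 + n*x^2 + n) (-(n:ℝ))) := by
    constructor
    · simp only [hfa]
      have h1 : (0:ℝ) < 2/(n:ℝ) + 1/(n:ℝ)^3 := by positivity
      nlinarith [h1]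
    · simp only
      nlinarith
  obtain ⟨r, hrmem, hr0⟩ := intermediate_value_Ioo hle hcont h0
  obtain ⟨hr1, hr2⟩ := hrmem
  have hroot : r^3 + n*r^2 + n = 0 := hr0
  -- the quadratic cofactor
  set b : ℝ := (n:ℝ) + r with hb
  set c : ℝ := r * ((n:ℝ) + r) with hc
  have hrc : r * c = -(n:ℝ) := by rw [hc]; linear_combination hroot
  have hrneg : r < 0 := by linarith
  have hbneg : b < 0 := by rw [hb]; linarith
  have hblow : -(1/(n:ℝ)) < b := by rw [hb]; linarith
  have hinv2 : 1/(n:ℝ) ≤ 1/2 := by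
    rw [div_le_div_iff₀ hnpos (by norm_num)]; linarith
  have hc1 : c < 1 := by nlinarith
  have hc0 : (1:ℝ)/2 < c := by nlinarith
  have hd : (0:ℝ) < c - b^2/4 := by nlinarith
  set τ : ℂ := ⟨-b/2, Real.sqrt (c - b^2/4)⟩ with hτ
  have him : τ.im = Real.sqrt (c - b^2/4) := rfl
  have hre : τ.re = -b/2 := rfl
  have himpos : 0 < τ.im := by rw [him]; exact Real.sqrt_pos.mpr hd
  have hsum : τ + (starRingEnd ℂ) τ = ((-b : ℝ) : ℂ) := by
    apply Complex.ext <;> simp [hre, him]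
  have hprod : τ * (starRingEnd ℂ) τ = ((c : ℝ) : ℂ) := by
    rw [Complex.mul_conj]
    norm_cast
    rw [Complex.normSq_mk]
    rw [Real.mul_self_sqrt (le_of_lt hd)]
    ring
  have hrootc : (r:ℂ)^3 + (n:ℂ)*(r:ℂ)^2 + (n:ℂ) = 0 := by
    exact_mod_cast congrArg (Complex.ofReal) hroot
  have hb' : ((-b:ℝ):ℂ) = -((n:ℂ) + r) := by push_cast [hb]; ring
  have hc' : ((c:ℝ):ℂ) = (r:ℂ) * ((n:ℂ) + r) := by push_cast [hc]; ring
  rw [hb'] at hsum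
  rw [hc'] at hprod
  have key : ∀ z : ℂ, z ^ 3 + (n : ℂ) * z ^ 2 + (n : ℂ) =
      (z - (r : ℂ)) * (z - τ) * (z - (starRingEnd ℂ) τ) := by
    intro z
    linear_combination (z^2 - (r:ℂ)*z) * hsum + ((r:ℂ) - z) * hprod + hrootc
  -- |τ| < 1
  have hnsq : Complex.normSq τ = c := by
    rw [hτ, Complex.normSq_mk, Real.mul_self_sqrt (le_of_lt hd)]
    ring
  have habs : ‖τ‖ < 1 := by
    have h1 : ‖τ‖^2 = c := by rw [Complex.sq_norm, hnsq]
    nlinarith [norm_nonneg τ]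
  have hnorm : ‖τ‖ < 1 := by exact habs
  -- Mahler measure
  have habsr : 1 ≤ |r| := by
    rw [abs_of_neg hrneg]; linarith
  have hM : _root_.mahlerMeasure (X ^ 3 + C (n : ℂ) * X ^ 2 + C (n : ℂ)) = |r| := by
    set f : Polynomial ℂ := X ^ 3 + C (n : ℂ) * X ^ 2 + C (n : ℂ) with hfdef
    have hf : f = (X - C (r:ℂ)) * (X - C τ) * (X - C ((starRingEnd ℂ) τ)) := by
      apply Polynomial.funext
      intro z
      simp only [hfdef, eval_add, eval_mul, eval_sub, eval_pow, eval_X, eval_C]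
      exact key z
    have hmonic : f.Monic := by
      rw [hf]
      exact ((monic_X_sub_C _).mul (monic_X_sub_C _)).mul (monic_X_sub_C _)
    have hroots : f.roots = {(r:ℂ), τ, (starRingEnd ℂ) τ} := by
      rw [hf, roots_mul (by apply mul_ne_zero <;>
          first
            | exact mul_ne_zero (X_sub_C_ne_zero _) (X_sub_C_ne_zero _)
            | exact X_sub_C_ne_zero _),
        roots_mul (mul_ne_zero (X_sub_C_ne_zero _) (X_sub_C_ne_zero _)),
        roots_X_sub_C, roots_X_sub_C, roots_X_sub_C]
      rfl
    rw [_root_.mahlerMeasure, hroots, hmonic.leadingCoeff]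
    simp only [Multiset.insert_eq_cons, Multiset.map_cons, Multiset.map_singleton,
      Multiset.prod_cons, Multiset.prod_singleton]
    have h1 : max 1 ‖(r:ℂ)‖ = |r| := by
      rw [Complex.norm_real]
      exact max_eq_right habsr
    have h2 : max 1 ‖τ‖ = 1 := max_eq_left (le_of_lt hnorm)
    have h3 : max 1 ‖(starRingEnd ℂ) τ‖ = 1 := by
      rw [RCLike.norm_conj]
      exact max_eq_left (le_of_lt hnorm)
    rw [h1, h2, h3]
    simp
  refine ⟨r, τ, ne_of_gt himpos, key, hr1, hr2, habs, ?_, ?_, hM, ?_, ?_, ?_⟩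
  · rw [hre]; linarith
  · rw [hre]
    rw [lt_div_iff₀ (by linarith : (0:ℝ) < 2*(n:ℝ))]
    nlinarith
  · rw [hM, abs_of_neg hrneg]; linarith
  · rw [hM, abs_of_neg hrneg]; linarith
  · rw [hM, abs_of_neg hrneg]
    have hu : (n:ℝ) * (1/n) = 1 := by field_simp
    have h4 : (-r)^4 < ((n:ℝ)+1/n)^4 := by
      apply pow_lt_pow_left₀ (by linarith) (by linarith)
      norm_num
    nlinarith [hu, hinv2, hn2, sq_nonneg (1/(n:ℝ)), hinv]
end

section
/- Let p be a prime with p ≢ ±1 (mod 9), let θ = p^{1/3} be the real cube root of p, and let K = ℚ(θ), so that {1, θ, θ²} is an integral basis of O_K. Then there is no β ∈ O_K with β ∉ ℤ and M(β) < (1/10)·θ² = (1/10)·p^{2/3}. -/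
open Polynomial NumberField

/-- The Mahler measure of an algebraic number: the Mahler measure of its minimal
polynomial over `ℚ`. -/
noncomputable def mahlerMeasureAlg {K : Type*} [Field K] [Algebra ℚ K] (α : K) : ℝ :=
  _root_.mahlerMeasure ((minpoly ℚ α).map (algebraMap ℚ ℂ))

open IntermediateField

set_option maxHeartbeats 1000000


lemma noRatCube (p : ℕ) (hp : p.Prime) (r : ℚ) : r^3 ≠ (p:ℚ) := by
  intro h
  have hnum : r.num ^ 3 = (p:ℤ) := by
    have := congrArg Rat.num h
    rwa [Rat.num_pow, Rat.num_natCast] at this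
  have hN : r.num.natAbs ^ 3 = p := by
    have := congrArg Int.natAbs hnum
    simpa [Int.natAbs_pow] using this
  have h2 := hp.two_le
  have hdvd : r.num.natAbs ∣ p := hN ▸ dvd_pow_self _ (by norm_num)
  rcases (Nat.Prime.eq_one_or_self_of_dvd hp _ hdvd) with h1 | h1
  · rw [h1] at hN; simp at hN; omega
  · rw [h1] at hN
    have hN' : p*p*p = p := by linarith [hN, pow_succ p 2, pow_succ p 1, pow_one p]
    have hq : p*p ≥ 2*2 := Nat.mul_le_mul h2 h2
    have := Nat.mul_le_mul hq (le_refl p)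
    omega

lemma minpolyTheta (p : ℕ) (hp : p.Prime) (θ : ℝ) (hθ3 : θ^3 = p) :
    minpoly ℚ θ = X^3 - C (p:ℚ) := by
  have hirr : Irreducible (X^3 - C (p:ℚ)) :=
    X_pow_sub_C_irreducible_of_prime (by norm_num) (fun b => noRatCube p hp b)
  refine (minpoly.eq_of_irreducible_of_monic (x := θ) hirr ?_ ?_).symm
  · simp [hθ3]
  · exact monic_X_pow_sub_C (p:ℚ) (by norm_num)

lemma ratInt (x : ℝ) (hx : IsIntegral ℤ x) (q : ℚ) (hq : (q:ℝ) = x) : ∃ m : ℤ, (m:ℚ) = q := by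
  have h1 : IsIntegral ℤ q := by
    rw [← isIntegral_algebraMap_iff (algebraMap ℚ ℝ).injective]
    rwa [show (algebraMap ℚ ℝ) q = x from by rw [eq_ratCast]; exact hq]
  exact IsIntegrallyClosed.isIntegral_iff.mp h1

lemma den_one (k : ℕ) (hcf : ∀ q : ℕ, q.Prime → ¬ (q^3 ∣ k))
    (b : ℚ) (m : ℤ) (h : (k:ℚ) * b^3 = (m:ℚ)) : ∃ B : ℤ, (B:ℚ) = b := by
  have hd : b.den = 1 := by
    by_contra hd1
    obtain ⟨q, hq, hqd⟩ := Nat.exists_prime_and_dvd hd1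
    have hZ : (k:ℤ) * b.num^3 = m * (b.den:ℤ)^3 := by
      have hden : ((b.den:ℚ)) ≠ 0 := by exact_mod_cast b.den_nz
      have hb : (b.num : ℚ) = b * (b.den : ℚ) :=
        (div_eq_iff hden).mp (Rat.num_div_den b)
      have : ((k:ℤ) * b.num^3 : ℚ) = ((m * (b.den:ℤ)^3 : ℤ) : ℚ) := by
        push_cast
        rw [hb]
        linear_combination ((b.den:ℚ))^3 * h
      exact_mod_cast this
    have hN : k * b.num.natAbs^3 = m.natAbs * b.den^3 := by
      have := congrArg Int.natAbs hZ
      simpa [Int.natAbs_mul, Int.natAbs_pow] using this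
    have hdvd : q^3 ∣ k * b.num.natAbs^3 := by
      rw [hN]
      exact Dvd.dvd.mul_left (pow_dvd_pow_of_dvd hqd 3) m.natAbs
    have hcop : Nat.Coprime (q^3) (b.num.natAbs^3) :=
      Nat.Coprime.pow 3 3 ((Nat.Coprime.coprime_dvd_right hqd b.reduced).symm)
    exact hcf q hq (hcop.dvd_of_dvd_mul_right hdvd)
  exact ⟨b.num, by rw [← Rat.num_div_den b, hd]; simp⟩

-- cube-free facts
lemma cubefree_p (p : ℕ) (hp : p.Prime) : ∀ q : ℕ, q.Prime → ¬ (q^3 ∣ p) := by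
  intro q hq hdvd
  have h1 : q ∣ p := dvd_trans (dvd_pow_self q (by norm_num)) hdvd
  rcases (hp.eq_one_or_self_of_dvd q h1) with h | h
  · exact hq.one_lt.ne' h
  · subst h
    have hle := Nat.le_of_dvd hp.pos hdvd
    have hlt : q^1 < q^3 := Nat.pow_lt_pow_right hq.one_lt (by norm_num)
    rw [pow_one] at hlt
    omega

lemma cubefree_psq (p : ℕ) (hp : p.Prime) : ∀ q : ℕ, q.Prime → ¬ (q^3 ∣ p^2) := by
  intro q hq hdvd
  have h1 : q ∣ p^2 := dvd_trans (dvd_pow_self q (by norm_num)) hdvd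
  have h2 : q ∣ p := hq.dvd_of_dvd_pow h1
  rcases (hp.eq_one_or_self_of_dvd q h2) with h | h
  · exact hq.one_lt.ne' h
  · subst h
    have hle := Nat.le_of_dvd (pow_pos hp.pos 2) hdvd
    have hlt : q^2 < q^3 := Nat.pow_lt_pow_right hq.one_lt (by norm_num)
    omega

lemma intPrime (p : ℕ) (hp : p.Prime) : Prime (p:ℤ) := by
  rw [Int.prime_iff_natAbs_prime]; simpa using hp

lemma repr3 (p : ℕ) (θ : ℝ) (hθ3 : θ^3 = (p:ℝ)) (hθint : IsIntegral ℚ θ) (β : ℝ)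
    (hmem : β ∈ IntermediateField.adjoin ℚ ({θ} : Set ℝ)) :
    ∃ a b c : ℚ, β = (a:ℝ) + (b:ℝ)*θ + (c:ℝ)*θ^2 := by
  have h1 : β ∈ Algebra.adjoin ℚ ({θ} : Set ℝ) := by
    have h2 := IntermediateField.adjoin_simple_toSubalgebra_of_isAlgebraic hθint.isAlgebraic
    have h3 : β ∈ ℚ⟮θ⟯.toSubalgebra := hmem
    rwa [h2] at h3
  rw [Algebra.adjoin_singleton_eq_range_aeval] at h1
  obtain ⟨q, hq⟩ := h1
  set f : ℚ[X] := X^3 - C (p:ℚ) with hf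
  have hfm : f.Monic := monic_X_pow_sub_C _ (by norm_num)
  set r := q %ₘ f with hrr
  have hev : Polynomial.aeval θ r = β := by
    have hdiv := Polynomial.modByMonic_add_div q f
    have hzero : Polynomial.aeval θ f = 0 := by simp [hf, hθ3]
    calc Polynomial.aeval θ r
        = Polynomial.aeval θ r + Polynomial.aeval θ f * Polynomial.aeval θ (q /ₘ f) := by
          rw [hzero]; ring
      _ = Polynomial.aeval θ (r + f * (q /ₘ f)) := by rw [map_add, map_mul]
      _ = Polynomial.aeval θ q := by rw [hrr, hdiv]
      _ = β := hq
  have hdeg : r.natDegree < 3 := by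
    by_cases h0 : r = 0
    · simp [h0]
    · have hlt := degree_modByMonic_lt q hfm
      have hdf : f.degree = 3 := by rw [hf]; exact degree_X_pow_sub_C (by norm_num) _
      rw [← hrr, hdf] at hlt
      exact (natDegree_lt_iff_degree_lt h0).mpr hlt
  refine ⟨r.coeff 0, r.coeff 1, r.coeff 2, ?_⟩
  rw [← hev, Polynomial.aeval_eq_sum_range' hdeg]
  simp [Finset.sum_range_succ, Algebra.smul_def]

lemma coeffs (p : ℕ) (hp : p.Prime) (θ : ℝ) (hθ3 : θ^3 = (p:ℝ))
    (hθm : minpoly ℚ θ = X^3 - C (p:ℚ))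
    (x y z : ℚ) (γ : ℝ) (hγ : γ = (x:ℝ) + (y:ℝ)*θ + (z:ℝ)*θ^2)
    (hyz : y ≠ 0 ∨ z ≠ 0) (hint : IsIntegral ℤ γ) :
    minpoly ℚ γ = X^3 + C (-(3*x)) * X^2 + C (3*x^2-3*p*y*z) * X
        + C (-(x^3+p*y^3+p^2*z^3-3*p*x*y*z)) ∧
    (∃ A : ℤ, (A:ℚ) = 3*x) ∧ (∃ V : ℤ, (V:ℚ) = 3*x^2-3*p*y*z) ∧
    (∃ N : ℤ, (N:ℚ) = x^3+p*y^3+p^2*z^3-3*p*x*y*z) := by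
  have hγQ : IsIntegral ℚ γ := hint.tower_top
  have hθint : IsIntegral ℚ θ :=
    ⟨X^3 - C (p:ℚ), monic_X_pow_sub_C _ (by norm_num), by simp [hθ3]⟩
  -- irrationality of γ
  have hirrat : ∀ q : ℚ, (q:ℝ) ≠ γ := by
    intro q hq
    set P : ℚ[X] := C (x - q) + C y * X + C z * X^2 with hP
    have hPne : P ≠ 0 := by
      intro h
      rcases hyz with hy | hz
      · have : P.coeff 1 = y := by simp [hP, coeff_X_pow]
        rw [h] at this; simp at this; exact hy this.symm
      · have : P.coeff 2 = z := by simp [hP, coeff_X_pow]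
        rw [h] at this; simp at this; exact hz this.symm
    have hPθ : (Polynomial.aeval θ) P = 0 := by
      simp [hP]
      push_cast
      linear_combination - hq - hγ
    have hdvd := minpoly.dvd ℚ θ hPθ
    have hle : P.natDegree ≤ 2 := by rw [hP]; compute_degree
    have h3 : (minpoly ℚ θ).natDegree ≤ 2 :=
      le_trans (Polynomial.natDegree_le_of_dvd hdvd hPne) hle
    rw [hθm, natDegree_X_pow_sub_C] at h3
    omega
  -- degree of minpoly γ divides 3
  have hfin : FiniteDimensional ℚ ℚ⟮θ⟯ := IntermediateField.adjoin.finiteDimensional hθint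
  have hrank : Module.finrank ℚ ℚ⟮θ⟯ = 3 := by
    rw [IntermediateField.adjoin.finrank hθint, hθm, natDegree_X_pow_sub_C]
  have hmem : γ ∈ ℚ⟮θ⟯ := by
    rw [hγ]
    have hθmem : θ ∈ ℚ⟮θ⟯ := IntermediateField.mem_adjoin_simple_self ℚ θ
    exact add_mem (add_mem (SubfieldClass.ratCast_mem _ x)
      (mul_mem (SubfieldClass.ratCast_mem _ y) hθmem))
      (mul_mem (SubfieldClass.ratCast_mem _ z) (pow_mem hθmem 2))
  have hdvd3 : (minpoly ℚ γ).natDegree ∣ 3 := by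
    set γ' : ℚ⟮θ⟯ := ⟨γ, hmem⟩ with hγ'
    have hmap : algebraMap ℚ⟮θ⟯ ℝ γ' = γ := rfl
    have hinj : Function.Injective (algebraMap ℚ⟮θ⟯ ℝ) := (algebraMap ℚ⟮θ⟯ ℝ).injective
    have hγ'int : IsIntegral ℚ γ' := by
      rw [← isIntegral_algebraMap_iff hinj, hmap]; exact hγQ
    have := minpoly.degree_dvd hγ'int
    rw [hrank] at this
    rwa [← minpoly.algebraMap_eq hinj γ', hmap] at this
  -- the cubic g
  set d2 : ℚ := -(3*x) with hd2
  set d1 : ℚ := 3*x^2-3*p*y*z with hd1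
  set d0 : ℚ := -(x^3+p*y^3+p^2*z^3-3*p*x*y*z) with hd0
  set g : ℚ[X] := X^3 + C d2 * X^2 + C d1 * X + C d0 with hg
  have hgm : g.Monic := by
    apply monic_of_natDegree_le_of_coeff_eq_one 3
    · rw [hg]; compute_degree
    · rw [hg]; simp [coeff_X_pow]
  have hgdeg : g.natDegree = 3 := by rw [hg]; compute_degree!
  have hgγ : (Polynomial.aeval γ) g = 0 := by
    rw [hg]
    simp only [map_add, map_mul, map_pow, aeval_X, aeval_C, eq_ratCast]
    rw [hd2, hd1, hd0, hγ]
    push_cast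
    linear_combination ((y:ℝ)^3 + 3*(y:ℝ)^2*(z:ℝ)*θ + 3*(y:ℝ)*(z:ℝ)^2*θ^2 + (z:ℝ)^3*θ^3 + (z:ℝ)^3*(p:ℝ)) * hθ3
  have hdg : minpoly ℚ γ ∣ g := minpoly.dvd ℚ γ hgγ
  have hmm : (minpoly ℚ γ).Monic := minpoly.monic hγQ
  have hdeg1 : (minpoly ℚ γ).natDegree ≠ 1 := by
    intro h
    rcases minpoly.natDegree_eq_one_iff.mp h with ⟨q, hq⟩
    exact hirrat q (by rw [← hq]; simp)
  have hdeg3 : (minpoly ℚ γ).natDegree = 3 := by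
    rcases (Nat.Prime.eq_one_or_self_of_dvd (by norm_num) _ hdvd3) with h | h
    · exact absurd h hdeg1
    · exact h
  have hmeq : minpoly ℚ γ = g := by
    obtain ⟨u, hu⟩ := hdg
    have hune : u ≠ 0 := by rintro rfl; rw [mul_zero] at hu; exact hgm.ne_zero hu
    have huM : u.Monic := by
      have h2 := hgm
      rw [hu] at h2
      exact hmm.of_mul_monic_left h2
    have h3 := congrArg Polynomial.natDegree hu
    rw [hmm.natDegree_mul huM, hdeg3, hgdeg] at h3
    have hu0 : u.natDegree = 0 := by omega
    rw [huM.natDegree_eq_zero] at hu0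
    rw [hu, hu0, mul_one]
  -- integer coefficients
  have hZ : minpoly ℚ γ = (minpoly ℤ γ).map (Int.castRingHom ℚ) :=
    minpoly.isIntegrallyClosed_eq_field_fractions ℚ ℝ hint
  have hco : ∀ i, g.coeff i = ((minpoly ℤ γ).coeff i : ℚ) := by
    intro i
    rw [← hmeq, hZ, coeff_map]
    rfl
  have hc2 := hco 2
  have hc1 := hco 1
  have hc0 := hco 0
  rw [hg] at hc2 hc1 hc0
  simp [coeff_X_pow] at hc2 hc1 hc0
  refine ⟨hmeq, ⟨-((minpoly ℤ γ).coeff 2), ?_⟩, ⟨(minpoly ℤ γ).coeff 1, ?_⟩,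
    ⟨-((minpoly ℤ γ).coeff 0), ?_⟩⟩
  · rw [hd2] at hc2; push_cast; linarith
  · rw [hd1] at hc1; push_cast; linarith
  · rw [hd0] at hc0; push_cast; linarith


lemma mahler_bound (p : ℕ) (θ : ℝ) (hθ3 : θ^3 = (p:ℝ)) (a b c : ℚ) (β : ℝ)
    (hβ : β = (a:ℝ) + (b:ℝ)*θ + (c:ℝ)*θ^2)
    (hm : minpoly ℚ β = X^3 + C (-(3*a)) * X^2 + C (3*a^2-3*p*b*c) * X
        + C (-(a^3+p*b^3+p^2*c^3-3*p*a*b*c))) :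
    mahlerMeasureAlg β ≥ ((a:ℝ) - ((b:ℝ)*θ + (c:ℝ)*θ^2)/2)^2
        + (Real.sqrt 3/2*((b:ℝ)*θ - (c:ℝ)*θ^2))^2 ∧
    4*(mahlerMeasureAlg β)^2 ≥ (β - ((a:ℝ) - ((b:ℝ)*θ + (c:ℝ)*θ^2)/2))^2
        + (Real.sqrt 3/2*((b:ℝ)*θ - (c:ℝ)*θ^2))^2 := by
  have hs3 : Real.sqrt 3 ^ 2 = 3 := Real.sq_sqrt (by norm_num)
  set R : ℝ := (a:ℝ) - ((b:ℝ)*θ + (c:ℝ)*θ^2)/2 with hR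
  set S : ℝ := Real.sqrt 3/2*((b:ℝ)*θ - (c:ℝ)*θ^2) with hS
  set Z0 : ℂ := (β:ℂ) with hZ0
  set Z1 : ℂ := (R:ℂ) + (S:ℂ)*Complex.I with hZ1
  set Z2 : ℂ := (R:ℂ) - (S:ℂ)*Complex.I with hZ2
  have expand : ∀ (z0 z1 z2 : ℂ), (X - C z0)*((X - C z1)*(X - C z2))
      = X^3 - C (z0+z1+z2) * X^2 + C (z0*z1+z0*z2+z1*z2) * X - C (z0*z1*z2) := by
    intros; simp only [C_add, C_mul]; ring
  have e1 : Z0 + Z1 + Z2 = ((3*a : ℚ) : ℂ) := by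
    have h : Z0 + Z1 + Z2 = ((β + 2*R : ℝ) : ℂ) := by rw [hZ0, hZ1, hZ2]; push_cast; ring
    rw [h, ← Complex.ofReal_ratCast]
    exact Complex.ofReal_inj.mpr (by rw [hβ, hR]; push_cast; ring)
  have e2 : Z0*Z1 + Z0*Z2 + Z1*Z2 = ((3*a^2-3*(p:ℚ)*b*c : ℚ) : ℂ) := by
    have h : Z0*Z1 + Z0*Z2 + Z1*Z2 = ((2*β*R + R^2 + S^2 : ℝ) : ℂ) := by
      rw [hZ0, hZ1, hZ2]; push_cast
      linear_combination (-(S:ℂ)^2) * Complex.I_sq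
    rw [h, ← Complex.ofReal_ratCast]
    refine Complex.ofReal_inj.mpr ?_
    rw [hβ, hR, hS]; push_cast
    linear_combination (((b:ℝ)*θ - (c:ℝ)*θ^2)^2/4) * hs3 - 3*(b:ℝ)*(c:ℝ)*hθ3
  have e3 : Z0*Z1*Z2 = ((a^3+(p:ℚ)*b^3+(p:ℚ)^2*c^3-3*(p:ℚ)*a*b*c : ℚ) : ℂ) := by
    have h : Z0*Z1*Z2 = ((β*(R^2 + S^2) : ℝ) : ℂ) := by
      rw [hZ0, hZ1, hZ2]; push_cast
      linear_combination (-(β:ℂ)*(S:ℂ)^2) * Complex.I_sq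
    rw [h, ← Complex.ofReal_ratCast]
    refine Complex.ofReal_inj.mpr ?_
    rw [hβ, hR, hS]; push_cast
    linear_combination (((a:ℝ)+(b:ℝ)*θ+(c:ℝ)*θ^2)*((b:ℝ)*θ-(c:ℝ)*θ^2)^2/4) * hs3
      + ((b:ℝ)^3 + (c:ℝ)^3*(θ^3+(p:ℝ)) - 3*(a:ℝ)*(b:ℝ)*(c:ℝ)) * hθ3
  have e1' : (algebraMap ℚ ℂ) (-(3*a)) = -(Z0+Z1+Z2) := by
    rw [e1, eq_ratCast]; push_cast; ring
  have e2' : (algebraMap ℚ ℂ) (3*a^2-3*(p:ℚ)*b*c) = Z0*Z1+Z0*Z2+Z1*Z2 := by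
    rw [e2, eq_ratCast]
  have e3' : (algebraMap ℚ ℂ) (-(a^3+(p:ℚ)*b^3+(p:ℚ)^2*c^3-3*(p:ℚ)*a*b*c)) = -(Z0*Z1*Z2) := by
    rw [e3, eq_ratCast]; push_cast; ring
  have key : (minpoly ℚ β).map (algebraMap ℚ ℂ) = (X - C Z0) * ((X - C Z1) * (X - C Z2)) := by
    rw [hm]
    simp only [Polynomial.map_add, Polynomial.map_mul, Polynomial.map_pow, map_X, map_C]
    rw [expand Z0 Z1 Z2, e1', e2', e3']
    simp only [map_neg]
    ring
  have hroots : ((X - C Z0) * ((X - C Z1) * (X - C Z2))).roots = {Z0, Z1, Z2} := by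
    rw [roots_mul (mul_ne_zero (X_sub_C_ne_zero Z0)
        (mul_ne_zero (X_sub_C_ne_zero Z1) (X_sub_C_ne_zero Z2))),
      roots_mul (mul_ne_zero (X_sub_C_ne_zero Z1) (X_sub_C_ne_zero Z2)),
      roots_X_sub_C, roots_X_sub_C, roots_X_sub_C]
    rfl
  have hmonic : ((X - C Z0) * ((X - C Z1) * (X - C Z2))).Monic :=
    (monic_X_sub_C Z0).mul ((monic_X_sub_C Z1).mul (monic_X_sub_C Z2))
  have hM : mahlerMeasureAlg β = max 1 ‖Z0‖ * (max 1 ‖Z1‖ * max 1 ‖Z2‖) := by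
    unfold mahlerMeasureAlg _root_.mahlerMeasure
    rw [key, hroots, hmonic.leadingCoeff]
    simp [Multiset.prod_cons]
  have n1 : ‖Z1‖ = Real.sqrt (R^2 + S^2) := by
    have h : ‖Z1‖^2 = R^2 + S^2 := by
      rw [hZ1, Complex.sq_norm, Complex.normSq_add_mul_I]
    rw [← h, Real.sqrt_sq (norm_nonneg _)]
  have n2 : ‖Z2‖ = Real.sqrt (R^2 + S^2) := by
    have hz : Z2 = ((R:ℝ):ℂ) + ((-S:ℝ):ℂ)*Complex.I := by rw [hZ2]; push_cast; ring
    have h : ‖Z2‖^2 = R^2 + S^2 := by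
      rw [hz, Complex.sq_norm, Complex.normSq_add_mul_I, neg_sq]
    rw [← h, Real.sqrt_sq (norm_nonneg _)]
  have hn12 : ‖Z1‖ * ‖Z2‖ = R^2 + S^2 := by
    rw [n1, n2]
    exact Real.mul_self_sqrt (by positivity)
  have hm0 : (1:ℝ) ≤ max 1 ‖Z0‖ := le_max_left _ _
  have hm1 : (1:ℝ) ≤ max 1 ‖Z1‖ := le_max_left _ _
  have hm2 : (1:ℝ) ≤ max 1 ‖Z2‖ := le_max_left _ _
  have hb1 : ‖Z1‖ ≤ max 1 ‖Z1‖ := le_max_right _ _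
  have hb2 : ‖Z2‖ ≤ max 1 ‖Z2‖ := le_max_right _ _
  have hb0 : ‖Z0‖ ≤ max 1 ‖Z0‖ := le_max_right _ _
  constructor
  · rw [hM, ← hn12]
    have h12 : ‖Z1‖ * ‖Z2‖ ≤ max 1 ‖Z1‖ * max 1 ‖Z2‖ :=
      mul_le_mul hb1 hb2 (norm_nonneg _) (le_trans zero_le_one hm1)
    have h0 : max 1 ‖Z1‖ * max 1 ‖Z2‖ ≤ max 1 ‖Z0‖ * (max 1 ‖Z1‖ * max 1 ‖Z2‖) :=
      le_mul_of_one_le_left (by positivity) hm0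
    linarith
  · have hd : ‖Z0 - Z1‖^2 = (β - R)^2 + S^2 := by
      have hz : Z0 - Z1 = ((β - R : ℝ):ℂ) + ((-S:ℝ):ℂ)*Complex.I := by
        rw [hZ0, hZ1]; push_cast; ring
      rw [hz, Complex.sq_norm, Complex.normSq_add_mul_I, neg_sq]
    have hZ0M : ‖Z0‖ ≤ mahlerMeasureAlg β := by
      rw [hM]
      calc ‖Z0‖ ≤ max 1 ‖Z0‖ := hb0
        _ ≤ max 1 ‖Z0‖ * (max 1 ‖Z1‖ * max 1 ‖Z2‖) :=
          le_mul_of_one_le_right (by positivity) (one_le_mul_of_one_le_of_one_le hm1 hm2)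
    have hZ1M : ‖Z1‖ ≤ mahlerMeasureAlg β := by
      rw [hM]
      calc ‖Z1‖ ≤ max 1 ‖Z1‖ := hb1
        _ ≤ max 1 ‖Z1‖ * max 1 ‖Z2‖ := le_mul_of_one_le_right (by positivity) hm2
        _ ≤ max 1 ‖Z0‖ * (max 1 ‖Z1‖ * max 1 ‖Z2‖) := le_mul_of_one_le_left (by positivity) hm0
    have htri : ‖Z0 - Z1‖ ≤ 2 * mahlerMeasureAlg β := by
      calc ‖Z0 - Z1‖ ≤ ‖Z0‖ + ‖Z1‖ := norm_sub_le _ _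
        _ ≤ 2 * mahlerMeasureAlg β := by linarith
    have hsq : ‖Z0 - Z1‖^2 ≤ (2 * mahlerMeasureAlg β)^2 :=
      pow_le_pow_left₀ (norm_nonneg _) htri 2
    rw [hd] at hsq
    nlinarith [hsq]

/-- Let `p` be a prime with `p ≢ ±1 (mod 9)`, `θ = p^{1/3}` the real cube root of `p`,
and `K = ℚ(θ)` (so `O_K = ℤ[θ]`). Then there is no `β ∈ O_K`, `β ∉ ℤ`, with
`M(β) < (1/10)·θ² = (1/10)·p^{2/3}`. -/

theorem stmt13 (p : ℕ) (hp : p.Prime)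
    (h1 : (p : ZMod 9) ≠ 1) (h2 : (p : ZMod 9) ≠ -1)
    (θ : ℝ) (hθ : θ = (p : ℝ) ^ ((1 : ℝ)/3)) :
    ¬ ∃ β : ℝ, β ∈ IntermediateField.adjoin ℚ ({θ} : Set ℝ) ∧ IsIntegral ℤ β ∧
        (∀ m : ℤ, β ≠ (m : ℝ)) ∧
        mahlerMeasureAlg β < (1/10 : ℝ) * θ ^ 2 := by
  rintro ⟨β, hmem, hint, hnotint, hMlt⟩
  have hppos : (0:ℝ) < p := by exact_mod_cast hp.pos
  have hp2 : (2:ℝ) ≤ p := by exact_mod_cast hp.two_le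
  have hθpos : 0 < θ := by rw [hθ]; positivity
  have hθ3 : θ^3 = (p:ℝ) := by
    rw [hθ, ← Real.rpow_natCast ((p:ℝ) ^ ((1:ℝ)/3)) 3, ← Real.rpow_mul (le_of_lt hppos)]
    norm_num
  have hθlb : (1.2:ℝ) < θ := by nlinarith [hθpos, hθ3, hp2]
  have hθintQ : IsIntegral ℚ θ :=
    ⟨X^3 - C (p:ℚ), monic_X_pow_sub_C _ (by norm_num), by simp [hθ3]⟩
  have hθintZ : IsIntegral ℤ θ :=
    ⟨X^3 - C (p:ℤ), monic_X_pow_sub_C _ (by norm_num), by simp [hθ3]⟩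
  have hmθ : minpoly ℚ θ = X^3 - C (p:ℚ) := minpolyTheta p hp θ hθ3
  obtain ⟨a, b, c, hβ⟩ := repr3 p θ hθ3 hθintQ β hmem
  have hirr : ∀ q : ℚ, (q:ℝ) ≠ β := by
    intro q hq
    obtain ⟨m, hm⟩ := ratInt β hint q hq
    exact hnotint m (by rw [← hq, ← hm]; norm_num)
  have hs3 : Real.sqrt 3 ^ 2 = 3 := Real.sq_sqrt (by norm_num)
  by_cases hc : c = 0
  · -- case c = 0, so b ≠ 0 and in fact b is a nonzero integer
    have hb0 : b ≠ 0 := by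
      intro hb0
      exact hirr a (by rw [hβ, hb0, hc]; push_cast; ring)
    obtain ⟨hmin, ⟨A, hA⟩, ⟨V, hV⟩, ⟨N, hN⟩⟩ :=
      coeffs p hp θ hθ3 hmθ a b c β hβ (Or.inl hb0) hint
    -- a is an integer
    have hA2 : A^2 = 3*V := by
      have : ((A:ℚ))^2 = 3*(V:ℚ) := by rw [hA, hV, hc]; ring
      exact_mod_cast this
    have h3A : (3:ℤ) ∣ A := by
      have hpr : Prime (3:ℤ) := Int.prime_three
      exact hpr.dvd_of_dvd_pow (n := 2) ⟨V, hA2⟩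
    obtain ⟨A', hA'⟩ := h3A
    have ha : ((A':ℚ)) = a := by
      have : (3:ℚ) * (A':ℚ) = 3 * a := by
        rw [← hA, hA']; push_cast; ring
      linarith
    -- b is an integer
    have hpb : (p:ℚ) * b^3 = ((N - A'^3 : ℤ) : ℚ) := by
      push_cast
      rw [← ha] at hN
      rw [hN, hc]
      ring
    obtain ⟨B, hB⟩ := den_one p (cubefree_p p hp) b (N - A'^3) hpb
    have hBnz : B ≠ 0 := by
      intro h
      exact hb0 (by rw [← hB, h]; norm_num)
    have hB1 : (1:ℝ) ≤ (b:ℝ)^2 := by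
      have h1 : (1:ℤ) ≤ B^2 := by
        have h0 : 0 < B^2 := by positivity
        linarith
    -- cast
      have : (1:ℝ) ≤ ((B:ℝ))^2 := by exact_mod_cast h1
      have hbB : ((B:ℝ)) = (b:ℝ) := by exact_mod_cast hB
      rwa [hbB] at this
    obtain ⟨hMB1, hMB2⟩ := mahler_bound p θ hθ3 a b c β hβ hmin
    set M := mahlerMeasureAlg β with hMdef
    have hcR : ((c:ℝ)) = 0 := by exact_mod_cast hc
    have hSS : (Real.sqrt 3/2*((b:ℝ)*θ - (c:ℝ)*θ^2))^2 = 3/4*((b:ℝ)*θ - (c:ℝ)*θ^2)^2 := by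
      linear_combination (((b:ℝ)*θ - (c:ℝ)*θ^2)^2/4) * hs3
    rw [hSS, hcR] at hMB1
    have key1 : M ≥ 3/4*((b:ℝ)*θ)^2 := by
      nlinarith [hMB1, sq_nonneg ((a:ℝ) - ((b:ℝ)*θ + 0*θ^2)/2)]
    have key2 : ((b:ℝ)*θ)^2 ≥ θ^2 := by
      nlinarith [hB1, sq_nonneg θ, mul_nonneg (by linarith : (0:ℝ) ≤ (b:ℝ)^2 - 1) (sq_nonneg θ)]
    linarith [key1, key2, hMlt, pow_pos hθpos 2]
  · -- case c ≠ 0 : show (3c) is a nonzero integer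
    obtain ⟨hmin, ⟨A, hA⟩, ⟨V, hV⟩, ⟨N, hN⟩⟩ :=
      coeffs p hp θ hθ3 hmθ a b c β hβ (Or.inr hc) hint
    have hc2 : (1/9 : ℝ) ≤ ((c:ℝ))^2 := by
      by_cases hb0 : b = 0
      ·
        have hA2 : A^2 = 3*V := by
          have : ((A:ℚ))^2 = 3*(V:ℚ) := by rw [hA, hV, hb0]; ring
          exact_mod_cast this
        have h3A : (3:ℤ) ∣ A := by
          have hpr : Prime (3:ℤ) := Int.prime_three
          exact hpr.dvd_of_dvd_pow (n := 2) ⟨V, hA2⟩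
        obtain ⟨A', hA'⟩ := h3A
        have ha : ((A':ℚ)) = a := by
          have : (3:ℚ) * (A':ℚ) = 3 * a := by rw [← hA, hA']; push_cast; ring
          linarith
        have hpc : ((p^2 : ℕ):ℚ) * c^3 = ((N - A'^3 : ℤ) : ℚ) := by
          push_cast
          rw [← ha] at hN
          rw [hN, hb0]
          ring
        obtain ⟨C0, hC0⟩ := den_one (p^2) (cubefree_psq p hp) c (N - A'^3) hpc
        have hC0nz : C0 ≠ 0 := by
          intro h
          exact hc (by rw [← hC0, h]; norm_num)
        have h1 : (1:ℤ) ≤ C0^2 := by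
          have h0 : 0 < C0^2 := by positivity
          linarith
        have h1R : (1:ℝ) ≤ ((C0:ℝ))^2 := by exact_mod_cast h1
        have hbC : ((C0:ℝ)) = (c:ℝ) := by exact_mod_cast hC0
        rw [hbC] at h1R
        linarith
      · -- b ≠ 0 and c ≠ 0 : use θβ and θ²β
        have hpQ : ((p:ℚ)) ≠ 0 := by
          exact_mod_cast hp.ne_zero
        have hβ1 : θ*β = (((p:ℚ)*c : ℚ):ℝ) + (a:ℝ)*θ + (b:ℝ)*θ^2 := by
          rw [hβ]; push_cast
          linear_combination (c:ℝ) * hθ3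
        have hβ2 : θ^2*β = (((p:ℚ)*b : ℚ):ℝ) + (((p:ℚ)*c : ℚ):ℝ)*θ + (a:ℝ)*θ^2 := by
          rw [hβ]; push_cast
          linear_combination ((b:ℝ) + (c:ℝ)*θ) * hθ3
        obtain ⟨_, ⟨A1, hA1⟩, -, -⟩ :=
          coeffs p hp θ hθ3 hmθ ((p:ℚ)*c) a b (θ*β) hβ1 (Or.inr hb0) (hθintZ.mul hint)
        obtain ⟨_, ⟨B1, hB1⟩, -, -⟩ :=
          coeffs p hp θ hθ3 hmθ ((p:ℚ)*b) ((p:ℚ)*c) a (θ^2*β) hβ2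
            (Or.inl (mul_ne_zero hpQ hc)) ((hθintZ.pow 2).mul hint)
        -- A = 3a, A1 = 3pc, B1 = 3pb, N = norm
        have hEq : 27*(p:ℤ)^2*N = (p:ℤ)^2*A^3 + B1^3 + (p:ℤ)*A1^3 - 3*(p:ℤ)*A*B1*A1 := by
          have : (27*(p:ℤ)^2*N : ℚ) = ((p:ℤ)^2*A^3 + B1^3 + (p:ℤ)*A1^3 - 3*(p:ℤ)*A*B1*A1 : ℚ) := by
            push_cast
            rw [hN, hA, hB1, hA1]
            ring
          exact_mod_cast this
        have hpZ : Prime ((p:ℕ):ℤ) := intPrime p hp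
        have hpB1 : ((p:ℕ):ℤ) ∣ B1 := by
          apply hpZ.dvd_of_dvd_pow (n := 3)
          refine ⟨27*(p:ℤ)*N - (p:ℤ)*A^3 - A1^3 + 3*A*B1*A1, ?_⟩
          linear_combination -hEq
        obtain ⟨B', hB'⟩ := hpB1
        have hpA1 : ((p:ℕ):ℤ) ∣ A1 := by
          apply hpZ.dvd_of_dvd_pow (n := 3)
          refine ⟨27*N - A^3 - (p:ℤ)*B'^3 + 3*A*B'*A1, ?_⟩
          have hpne : ((p:ℕ):ℤ) ≠ 0 := by exact_mod_cast hp.ne_zero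
          have : (p:ℤ) * (A1^3 - ((p:ℕ):ℤ) * (27*N - A^3 - (p:ℤ)*B'^3 + 3*A*B'*A1)) = 0 := by
            rw [hB'] at hEq
            linear_combination -hEq
          rcases mul_eq_zero.mp this with h | h
          · exact absurd h hpne
          · linarith
        obtain ⟨C', hC'⟩ := hpA1
        have hC'q : ((C':ℚ)) = 3*c := by
          have hstep : ((p:ℚ)) * (C':ℚ) = (p:ℚ) * (3*c) := by
            have : ((A1:ℚ)) = (p:ℚ) * (C':ℚ) := by exact_mod_cast hC'
            rw [hA1] at this
            linarith [this]
          exact mul_left_cancel₀ hpQ hstep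
        have hC'nz : C' ≠ 0 := by
          intro h
          rw [h] at hC'q
          simp at hC'q
          exact hc hC'q
        have h1 : (1:ℤ) ≤ C'^2 := by
          have h0 : 0 < C'^2 := by positivity
          linarith
        have h1R : (1:ℝ) ≤ ((C':ℝ))^2 := by exact_mod_cast h1
        have h3c : ((C':ℝ)) = 3*(c:ℝ) := by exact_mod_cast hC'q
        rw [h3c] at h1R
        nlinarith [h1R]
    -- now the Mahler bound
    obtain ⟨hMB1, hMB2⟩ := mahler_bound p θ hθ3 a b c β hβ hmin
    set M := mahlerMeasureAlg β with hMdef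
    have hM0 : 0 ≤ M := by
      refine le_trans ?_ hMB1
      positivity
    have hE : (β - ((a:ℝ) - ((b:ℝ)*θ + (c:ℝ)*θ^2)/2))^2 + (Real.sqrt 3/2*((b:ℝ)*θ - (c:ℝ)*θ^2))^2
        = 3*((b:ℝ)*θ + (c:ℝ)*θ^2/2)^2 + 9/4*((c:ℝ)*θ^2)^2 := by
      rw [hβ]
      linear_combination (((b:ℝ)*θ - (c:ℝ)*θ^2)^2/4) * hs3
    rw [hE] at hMB2
    have step1 : 4*M^2 ≥ 9/4*((c:ℝ)*θ^2)^2 := by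
      linarith [hMB2, sq_nonneg ((b:ℝ)*θ + (c:ℝ)*θ^2/2)]
    have step2 : ((c:ℝ)*θ^2)^2 ≥ (1/9)*θ^4 := by
      nlinarith [mul_nonneg (by linarith [hc2] : (0:ℝ) ≤ (c:ℝ)^2 - 1/9) (pow_pos hθpos 4).le]
    have hMsq : M^2 < (1/10*θ^2)^2 := by
      have := mul_self_lt_mul_self hM0 hMlt
      nlinarith [this]
    nlinarith [step1, step2, hMsq, pow_pos hθpos 4]
end

section
/- Let K be a cubic number field with integral basis {1, b₂, b₃}, let φ: K → ℝ³ be the Minkowski embedding, set β_i = φ(b_i) (with b₁ = 1), let β₁*, β₂*, β₃* be the Gram–Schmidt orthogonalization of β₁, β₂, β₃, and assume the Gram–Schmidt coefficients satisfy |μ_{2,1}|, |μ_{3,1}|, |μ_{3,2}| ≤ 1/2. Set f = 3 if K is totally real and f = 2 otherwise. If α = a + b·b₂ + c·b₃ ∈ O_K is nonzero with a, b, c ∈ ℤ and M(α) < C, then |c| ≤ f^{1/2}·C/‖β₃*‖, |b| ≤ f^{1/2}·C/‖β₂*‖ + (1/2)·f^{1/2}·C/‖β₃*‖, and |a| ≤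 f^{1/2}·C/‖β₁*‖ + (1/2)·f^{1/2}·C/‖β₂*‖ + (3/4)·f^{1/2}·C/‖β₃*‖. -/
open Polynomial NumberField
open scoped RealInnerProductSpace

lemma one_le_msprod (s : Multiset ℝ) (h : ∀ x ∈ s, 1 ≤ x) : 1 ≤ s.prod := by
  induction s using Multiset.induction with
  | empty => simp
  | cons a t ih =>
    rw [Multiset.prod_cons]
    have ha : 1 ≤ a := h a (Multiset.mem_cons_self a t)
    have ht : 1 ≤ t.prod := ih fun x hx => h x (Multiset.mem_cons_of_mem hx)
    nlinarith

lemma mem_le_msprod (s : Multiset ℝ) (h : ∀ x ∈ s, 1 ≤ x) {x : ℝ} (hx : x ∈ s) :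
    x ≤ s.prod := by
  obtain ⟨t, rfl⟩ := Multiset.exists_cons_of_mem hx
  rw [Multiset.prod_cons]
  have ht : 1 ≤ t.prod := one_le_msprod t fun y hy => h y (Multiset.mem_cons_of_mem hy)
  have hx1 : 1 ≤ x := h x (Multiset.mem_cons_self x t)
  nlinarith

lemma norm_embed_le_mahler {K : Type*} [Field K] [NumberField K] (α : K) (ψ : K →+* ℂ) :
    ‖ψ α‖ ≤ mahlerMeasureAlg α := by
  have hint : IsIntegral ℚ α := IsIntegral.of_finite ℚ α
  have hp0 : minpoly ℚ α ≠ 0 := minpoly.ne_zero hint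
  have hmon : (minpoly ℚ α).Monic := minpoly.monic hint
  have hcomp : ψ.comp (algebraMap ℚ K) = algebraMap ℚ ℂ := by
    ext q
    simp [RingHom.comp_apply, eq_ratCast, map_ratCast]
  have hroot : (ψ α) ∈ ((minpoly ℚ α).map (algebraMap ℚ ℂ)).roots := by
    rw [Polynomial.mem_roots (Polynomial.map_ne_zero hp0)]
    have h0 : Polynomial.eval₂ (algebraMap ℚ K) α (minpoly ℚ α) = 0 := minpoly.aeval ℚ α
    rw [Polynomial.IsRoot, Polynomial.eval_map, ← hcomp, ← Polynomial.hom_eval₂, h0, map_zero]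
  have hall : ∀ y ∈ ((minpoly ℚ α).map (algebraMap ℚ ℂ)).roots.map (fun z => max 1 ‖z‖), 1 ≤ y := by
    intro y hy
    obtain ⟨z, _, rfl⟩ := Multiset.mem_map.mp hy
    exact le_max_left _ _
  have hmem : max 1 ‖ψ α‖ ∈ ((minpoly ℚ α).map (algebraMap ℚ ℂ)).roots.map (fun z => max 1 ‖z‖) :=
    Multiset.mem_map_of_mem _ hroot
  have := mem_le_msprod _ hall hmem
  have hl : ‖((minpoly ℚ α).map (algebraMap ℚ ℂ)).leadingCoeff‖ = 1 := by
    rw [(hmon.map _).leadingCoeff]; simp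
  calc ‖ψ α‖ ≤ max 1 ‖ψ α‖ := le_max_right _ _
    _ ≤ _ := this
    _ = mahlerMeasureAlg α := by rw [mahlerMeasureAlg, _root_.mahlerMeasure, hl, one_mul]

lemma one_le_mahler {K : Type*} [Field K] [NumberField K] (α : K) :
    1 ≤ mahlerMeasureAlg α := by
  have hint : IsIntegral ℚ α := IsIntegral.of_finite ℚ α
  have hmon : (minpoly ℚ α).Monic := minpoly.monic hint
  have hl : ‖((minpoly ℚ α).map (algebraMap ℚ ℂ)).leadingCoeff‖ = 1 := by
    rw [(hmon.map _).leadingCoeff]; simp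
  rw [mahlerMeasureAlg, _root_.mahlerMeasure, hl, one_mul]
  refine one_le_msprod _ ?_
  intro y hy
  obtain ⟨z, _, rfl⟩ := Multiset.mem_map.mp hy
  exact le_max_left _ _
set_option maxHeartbeats 1000000 in
lemma gs_bounds (β₁ β₂ β₃ β₁s β₂s β₃s : EuclideanSpace ℝ (Fin 3)) (μ21 μ31 μ32 : ℝ)
    (hμ21 : μ21 = ⟪β₂, β₁s⟫ / ‖β₁s‖ ^ 2)
    (hμ31 : μ31 = ⟪β₃, β₁s⟫ / ‖β₁s‖ ^ 2)
    (hμ32 : μ32 = ⟪β₃, β₂s⟫ / ‖β₂s‖ ^ 2)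
    (hgs1 : β₁s = β₁)
    (hgs2 : β₂s = β₂ - μ21 • β₁s)
    (hgs3 : β₃s = β₃ - μ31 • β₁s - μ32 • β₂s)
    (hb21 : |μ21| ≤ 1/2) (hb31 : |μ31| ≤ 1/2) (hb32 : |μ32| ≤ 1/2)
    (hind : ∀ x y z : ℝ, x • β₁ + y • β₂ + z • β₃ = 0 → x = 0 ∧ y = 0 ∧ z = 0)
    (a b c D : ℝ)
    (hv : ‖a • β₁ + b • β₂ + c • β₃‖ ≤ D) :
    |c| ≤ D / ‖β₃s‖ ∧ |b| ≤ D / ‖β₂s‖ + (1/2) * (D / ‖β₃s‖) ∧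
      |a| ≤ D / ‖β₁s‖ + (1/2) * (D / ‖β₂s‖) + (3/4) * (D / ‖β₃s‖) := by
  -- orthogonality
  have o21 : ⟪β₂s, β₁s⟫ = 0 := by
    by_cases h1 : β₁s = 0
    · simp [h1]
    · have hn : ‖β₁s‖ ≠ 0 := norm_ne_zero_iff.mpr h1
      rw [hgs2, inner_sub_left, real_inner_smul_left, real_inner_self_eq_norm_sq, hμ21,
        div_mul_cancel₀ _ (pow_ne_zero 2 hn), sub_self]
  have o31 : ⟪β₃s, β₁s⟫ = 0 := by
    by_cases h1 : β₁s = 0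
    · simp [h1]
    · have hn : ‖β₁s‖ ≠ 0 := norm_ne_zero_iff.mpr h1
      rw [hgs3, inner_sub_left, inner_sub_left, real_inner_smul_left, real_inner_smul_left,
        real_inner_self_eq_norm_sq, hμ31, div_mul_cancel₀ _ (pow_ne_zero 2 hn), o21]
      ring
  have o32 : ⟪β₃s, β₂s⟫ = 0 := by
    by_cases h2 : β₂s = 0
    · simp [h2]
    · have hn : ‖β₂s‖ ≠ 0 := norm_ne_zero_iff.mpr h2
      have h0 : ⟪β₁s, β₂s⟫ = 0 := by rw [real_inner_comm]; exact o21
      rw [hgs3, inner_sub_left, inner_sub_left, real_inner_smul_left, real_inner_smul_left,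
        real_inner_self_eq_norm_sq, hμ32, div_mul_cancel₀ _ (pow_ne_zero 2 hn), h0]
      ring
  -- nonvanishing
  have hn1 : β₁s ≠ 0 := by
    intro h
    have := (hind 1 0 0 (by rw [← hgs1, h]; simp)).1
    norm_num at this
  have hn2 : β₂s ≠ 0 := by
    intro h
    have hrel : (-μ21) • β₁ + (1:ℝ) • β₂ + (0:ℝ) • β₃ = 0 := by
      have h0 := h
      rw [hgs2, hgs1] at h0
      linear_combination (norm := module) h0
    have := (hind _ _ _ hrel).2.1
    norm_num at this
  have hn3 : β₃s ≠ 0 := by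
    intro h
    have hrel : (-μ31 + μ32 * μ21) • β₁ + (-μ32) • β₂ + (1:ℝ) • β₃ = 0 := by
      have h0 := h
      rw [hgs3, hgs2, hgs1] at h0
      linear_combination (norm := module) h0
    have := (hind _ _ _ hrel).2.2
    norm_num at this
  have p1 : (0:ℝ) < ‖β₁s‖ := norm_pos_iff.mpr hn1
  have p2 : (0:ℝ) < ‖β₂s‖ := norm_pos_iff.mpr hn2
  have p3 : (0:ℝ) < ‖β₃s‖ := norm_pos_iff.mpr hn3
  -- decomposition
  have e1 : β₁ = β₁s := hgs1.symm
  have e2 : β₂ = β₂s + μ21 • β₁s := by rw [hgs2]; module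
  have e3 : β₃ = β₃s + μ31 • β₁s + μ32 • β₂s := by rw [hgs3]; module
  set A := a + b * μ21 + c * μ31 with hA
  set B := b + c * μ32 with hB
  have hvdec : a • β₁ + b • β₂ + c • β₃ = A • β₁s + B • β₂s + c • β₃s := by
    rw [e1, e2, e3, hA, hB]; module
  set v := a • β₁ + b • β₂ + c • β₃ with hvdef
  have hDnn : 0 ≤ D := le_trans (norm_nonneg v) hv
  -- coefficient bounds
  have key : ∀ (t : ℝ) (w : EuclideanSpace ℝ (Fin 3)), ⟪v, w⟫ = t * ‖w‖ ^ 2 → 0 < ‖w‖ →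
      |t| ≤ D / ‖w‖ := by
    intro t w hip hw
    have h2 : |⟪v, w⟫| ≤ ‖v‖ * ‖w‖ := abs_real_inner_le_norm v w
    rw [hip, abs_mul, abs_of_nonneg (by positivity : (0:ℝ) ≤ ‖w‖ ^ 2)] at h2
    have hvD : ‖v‖ ≤ D := hv
    set x := |t| with hx
    set nw := ‖w‖ with hnw
    set nv := ‖v‖ with hnv
    have hxnn : 0 ≤ x := abs_nonneg t
    have hvnn : 0 ≤ nv := norm_nonneg v
    rw [le_div_iff₀ hw]
    nlinarith [mul_le_mul_of_nonneg_right hvD (le_of_lt hw)]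
  have o12 : ⟪β₁s, β₂s⟫ = (0:ℝ) := by rw [real_inner_comm]; exact o21
  have o13 : ⟪β₁s, β₃s⟫ = (0:ℝ) := by rw [real_inner_comm]; exact o31
  have o23 : ⟪β₂s, β₃s⟫ = (0:ℝ) := by rw [real_inner_comm]; exact o32
  have hc : |c| ≤ D / ‖β₃s‖ := by
    refine key c β₃s ?_ p3
    rw [hvdec, inner_add_left, inner_add_left, real_inner_smul_left, real_inner_smul_left,
      real_inner_smul_left, o13, o23, real_inner_self_eq_norm_sq]
    ring
  have hBb : |B| ≤ D / ‖β₂s‖ := by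
    refine key B β₂s ?_ p2
    rw [hvdec, inner_add_left, inner_add_left, real_inner_smul_left, real_inner_smul_left,
      real_inner_smul_left, o12, o32, real_inner_self_eq_norm_sq]
    ring
  have hAa : |A| ≤ D / ‖β₁s‖ := by
    refine key A β₁s ?_ p1
    rw [hvdec, inner_add_left, inner_add_left, real_inner_smul_left, real_inner_smul_left,
      real_inner_smul_left, o21, o31, real_inner_self_eq_norm_sq]
    ring
  -- assemble
  have hb' : |b| ≤ D / ‖β₂s‖ + (1/2) * (D / ‖β₃s‖) := by
    have : |b| ≤ |B| + |μ32| * |c| := by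
      have hbeq : B - c * μ32 = b := by rw [hB]; ring
      calc |b| = |B - c * μ32| := by rw [hbeq]
      _ ≤ |B| + |c * μ32| := abs_sub _ _
      _ = |B| + |μ32| * |c| := by rw [abs_mul]; ring
    have h32 : |μ32| * |c| ≤ (1/2) * (D / ‖β₃s‖) :=
      mul_le_mul hb32 hc (abs_nonneg c) (by norm_num)
    linarith
  refine ⟨hc, hb', ?_⟩
  have : |a| ≤ |A| + |μ21| * |b| + |μ31| * |c| := by
    have haeq : A - b * μ21 - c * μ31 = a := by rw [hA]; ring
    calc |a| = |A - b * μ21 - c * μ31| := by rw [haeq]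
    _ ≤ |A - b * μ21| + |c * μ31| := abs_sub _ _
    _ ≤ |A| + |b * μ21| + |c * μ31| := by linarith [abs_sub A (b * μ21)]
    _ = |A| + |μ21| * |b| + |μ31| * |c| := by rw [abs_mul, abs_mul]; ring
  have h21 : |μ21| * |b| ≤ (1/2) * (D / ‖β₂s‖ + (1/2) * (D / ‖β₃s‖)) :=
    mul_le_mul hb21 hb' (abs_nonneg b) (by norm_num)
  have h31 : |μ31| * |c| ≤ (1/2) * (D / ‖β₃s‖) :=
    mul_le_mul hb31 hc (abs_nonneg c) (by norm_num)
  linarith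


set_option maxHeartbeats 1000000 in
/-- Let `K` be a cubic field with integral basis `{1, b₂, b₃}`, `φ : K → ℝ³` the
Minkowski embedding (given by the three real embeddings if `K` is totally real, and by
the real embedding together with real and imaginary parts of a complex embedding
otherwise), `βᵢ = φ(bᵢ)` with Gram–Schmidt orthogonalization `β₁*, β₂*, β₃*` whose
coefficients satisfy `|μᵢⱼ| ≤ 1/2`, and `f = 3` if `K` is totally real, `f = 2`
otherwise. If `α = a + b·b₂ + c·b₃ ∈ O_K` is nonzero with `a, b, c ∈ ℤ` and `M(α) < C`,
then `|c| ≤ √f·C/‖β₃*‖`, `|b| ≤ √f·C/‖β₂*‖ + (1/2)·√f·C/‖β₃*‖`, and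
`|a| ≤ √f·C/‖β₁*‖ + (1/2)·√f·C/‖β₂*‖ + (3/4)·√f·C/‖β₃*‖`. -/
theorem stmt15 (K : Type*) [Field K] [NumberField K]
    (hdeg : Module.finrank ℚ K = 3)
    (b₂ b₃ : K) (hb₂ : IsIntegral ℤ b₂) (hb₃ : IsIntegral ℤ b₃)
    (hbasis : ∀ x : K, IsIntegral ℤ x ↔
      ∃ u v w : ℤ, x = (u : K) + (v : K) * b₂ + (w : K) * b₃)
    (φ : K → EuclideanSpace ℝ (Fin 3)) (f : ℝ)
    (hφ : (f = 3 ∧ (∀ v : InfinitePlace K, v.IsReal) ∧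
            ∃ σ₁ σ₂ σ₃ : K →+* ℝ, σ₁ ≠ σ₂ ∧ σ₁ ≠ σ₃ ∧ σ₂ ≠ σ₃ ∧
              ∀ x : K, φ x = ![σ₁ x, σ₂ x, σ₃ x]) ∨
          (f = 2 ∧ ¬ (∀ v : InfinitePlace K, v.IsReal) ∧
            ∃ (σ : K →+* ℝ) (τ : K →+* ℂ), (∃ x : K, (τ x).im ≠ 0) ∧
              ∀ x : K, φ x = ![σ x, (τ x).re, (τ x).im]))
    (β₁ β₂ β₃ : EuclideanSpace ℝ (Fin 3))
    (hβ₁ : β₁ = φ 1) (hβ₂ : β₂ = φ b₂) (hβ₃ : β₃ = φ b₃)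
    (β₁s β₂s β₃s : EuclideanSpace ℝ (Fin 3)) (μ21 μ31 μ32 : ℝ)
    (hμ21 : μ21 = ⟪β₂, β₁s⟫ / ‖β₁s‖ ^ 2)
    (hμ31 : μ31 = ⟪β₃, β₁s⟫ / ‖β₁s‖ ^ 2)
    (hμ32 : μ32 = ⟪β₃, β₂s⟫ / ‖β₂s‖ ^ 2)
    (hgs1 : β₁s = β₁)
    (hgs2 : β₂s = β₂ - μ21 • β₁s)
    (hgs3 : β₃s = β₃ - μ31 • β₁s - μ32 • β₂s)
    (hb21 : |μ21| ≤ 1/2) (hb31 : |μ31| ≤ 1/2) (hb32 : |μ32| ≤ 1/2)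
    (a b c : ℤ) (α : K)
    (hα : α = (a : K) + (b : K) * b₂ + (c : K) * b₃) (hne : α ≠ 0)
    (C : ℝ) (hM : mahlerMeasureAlg α < C) :
    |(c : ℝ)| ≤ Real.sqrt f * C / ‖β₃s‖ ∧
    |(b : ℝ)| ≤ Real.sqrt f * C / ‖β₂s‖ + (1/2) * (Real.sqrt f * C / ‖β₃s‖) ∧
    |(a : ℝ)| ≤ Real.sqrt f * C / ‖β₁s‖ + (1/2) * (Real.sqrt f * C / ‖β₂s‖) +
      (3/4) * (Real.sqrt f * C / ‖β₃s‖) := by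
  classical
  set bvec : Fin 3 → K := ![1, b₂, b₃] with hbvec
  -- `{1, b₂, b₃}` spans `K` over `ℚ`
  have hspan : ⊤ ≤ Submodule.span ℚ (Set.range bvec) := by
    rintro x -
    have halg : IsAlgebraic ℤ x := by
      rw [IsFractionRing.isAlgebraic_iff ℤ ℚ K]
      exact isAlgebraic_iff_isIntegral.mpr (IsIntegral.of_finite ℚ x)
    obtain ⟨y, d, hd, hxy⟩ : ∃ y : integralClosure ℤ K, ∃ d : ℤ, d ≠ 0 ∧
        algebraMap ℤ K d * x = y := by
      obtain ⟨d, hd, hi⟩ := halg.exists_integral_multiple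
      exact ⟨⟨d • x, hi⟩, d, hd, by simp [zsmul_eq_mul]⟩
    obtain ⟨u, v, w, huvw⟩ := (hbasis (y : K)).mp y.2
    have hdK : (d : K) ≠ 0 := Int.cast_ne_zero.mpr hd
    have hxeq : x = ((d:ℚ)⁻¹ * (u:ℚ)) • (1:K) + ((d:ℚ)⁻¹ * (v:ℚ)) • b₂ +
        ((d:ℚ)⁻¹ * (w:ℚ)) • b₃ := by
      have h1 : (d : K) * x = (u : K) + (v : K) * b₂ + (w : K) * b₃ := by
        rw [← huvw, ← hxy, algebraMap_int_eq, eq_intCast]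
      rw [Rat.smul_def, Rat.smul_def, Rat.smul_def]
      push_cast
      field_simp
      linear_combination h1
    rw [hxeq]
    have m1 : (1:K) ∈ Submodule.span ℚ (Set.range bvec) :=
      Submodule.subset_span ⟨0, by simp [hbvec]⟩
    have m2 : b₂ ∈ Submodule.span ℚ (Set.range bvec) :=
      Submodule.subset_span ⟨1, by simp [hbvec]⟩
    have m3 : b₃ ∈ Submodule.span ℚ (Set.range bvec) :=
      Submodule.subset_span ⟨2, by simp [hbvec]⟩
    exact Submodule.add_mem _ (Submodule.add_mem _ (Submodule.smul_mem _ _ m1)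
      (Submodule.smul_mem _ _ m2)) (Submodule.smul_mem _ _ m3)
  have hcard : Fintype.card (Fin 3) = Module.finrank ℚ K := by simp [hdeg]
  set B : Module.Basis (Fin 3) ℚ K := basisOfTopLeSpanOfCardEqFinrank bvec hspan hcard with hBdef
  have hBcoe : ⇑B = bvec := coe_basisOfTopLeSpanOfCardEqFinrank _ _ _
  have hcardE : Fintype.card (K →ₐ[ℚ] ℂ) = 3 := by
    rw [AlgHom.card ℚ K ℂ, hdeg]
  have hdiscr : Algebra.discr ℚ ⇑B ≠ 0 := Algebra.discr_not_zero_of_basis ℚ B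
  -- the real matrix of the Minkowski embedding
  set Mat : Matrix (Fin 3) (Fin 3) ℝ := Matrix.of (fun i j => (φ (bvec i)) j) with hMat
  -- generic: det from embeddings matrix
  have detstep : ∀ e : Fin 3 ≃ (K →ₐ[ℚ] ℂ),
      (Algebra.embeddingsMatrixReindex ℚ ℂ ⇑B e).det ≠ 0 := by
    intro e h
    apply hdiscr
    have hdet2 := Algebra.discr_eq_det_embeddingsMatrixReindex_pow_two ℚ ℂ ⇑B e
    have h2 : algebraMap ℚ ℂ (Algebra.discr ℚ ⇑B) = 0 := by rw [hdet2, h]; ring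
    exact (algebraMap ℚ ℂ).injective (by rw [h2, map_zero])
  -- from det Mat ≠ 0 to linear independence
  have indstep : Mat.det ≠ 0 →
      ∀ x y z : ℝ, x • β₁ + y • β₂ + z • β₃ = 0 → x = 0 ∧ y = 0 ∧ z = 0 := by
    intro hMatdet x y z h
    have hMatUnit : IsUnit Mat := (Matrix.isUnit_iff_isUnit_det Mat).mpr
      (isUnit_iff_ne_zero.mpr hMatdet)
    have hinj : Function.Injective Mat.vecMul := Matrix.vecMul_injective_iff_isUnit.mpr hMatUnit
    have h0 : Mat.vecMul ![x, y, z] = Mat.vecMul 0 := by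
      rw [Matrix.zero_vecMul]
      funext j
      rw [hβ₁, hβ₂, hβ₃] at h
      have hj : (x • φ 1 + y • φ b₂ + z • φ b₃) j = (0 : EuclideanSpace ℝ (Fin 3)) j := by
        rw [h]
      simp only [PiLp.add_apply, PiLp.smul_apply, PiLp.zero_apply, smul_eq_mul] at hj
      simp only [Matrix.vecMul, dotProduct, Fin.sum_univ_three, hMat, Matrix.of_apply,
        hbvec, Matrix.cons_val_zero, Matrix.cons_val_one, Matrix.head_cons, Matrix.cons_val_two,
        Matrix.tail_cons, Pi.zero_apply]
      linarith [hj]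
    have := hinj h0
    refine ⟨?_, ?_, ?_⟩
    · have := congrFun this 0; simpa using this
    · have := congrFun this 1; simpa using this
    · have := congrFun this 2; simpa using this
  obtain ⟨hind, hnrm, hphiα⟩ :
      (∀ x y z : ℝ, x • β₁ + y • β₂ + z • β₃ = 0 → x = 0 ∧ y = 0 ∧ z = 0) ∧
      (‖φ α‖ ≤ Real.sqrt f * mahlerMeasureAlg α) ∧
      (φ α = (a:ℝ) • β₁ + (b:ℝ) • β₂ + (c:ℝ) • β₃) := by
    have hMv1 : (1:ℝ) ≤ mahlerMeasureAlg α := one_le_mahler α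
    have hMv0 : (0:ℝ) ≤ mahlerMeasureAlg α := le_trans zero_le_one hMv1
    rcases hφ with ⟨hf, hreal, σ₁, σ₂, σ₃, h12, h13, h23, hφx⟩ |
      ⟨hf, hnreal, σ, τ, ⟨x₀, hx₀⟩, hφx⟩
    · -- totally real case
      set r : (K →+* ℝ) → (K →ₐ[ℚ] ℂ) :=
        fun s => (RingHom.equivRatAlgHom K ℂ) (Complex.ofRealHom.comp s) with hr
      have hrinj : ∀ s t : K →+* ℝ, r s = r t → s = t := by
        intro s t hst
        have h1 : Complex.ofRealHom.comp s = Complex.ofRealHom.comp t :=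
          (RingHom.equivRatAlgHom K ℂ).injective hst
        ext x
        have h2 := congrArg (fun g => g x) h1
        simpa using h2
      have hd12 : r σ₁ ≠ r σ₂ := fun h => h12 (hrinj _ _ h)
      have hd13 : r σ₁ ≠ r σ₃ := fun h => h13 (hrinj _ _ h)
      have hd23 : r σ₂ ≠ r σ₃ := fun h => h23 (hrinj _ _ h)
      set ψ : Fin 3 → (K →ₐ[ℚ] ℂ) := ![r σ₁, r σ₂, r σ₃] with hψ
      have hψinj : Function.Injective ψ := by
        intro i j hij
        fin_cases i <;> fin_cases j <;>
          simp only [hψ, Matrix.cons_val_zero, Matrix.cons_val_one, Matrix.head_cons,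
            Matrix.cons_val_two, Matrix.tail_cons, Fin.mk_zero, Fin.mk_one] at hij ⊢ <;>
          first
            | rfl
            | exact absurd hij hd12
            | exact absurd hij hd13
            | exact absurd hij hd23
            | exact absurd hij.symm hd12
            | exact absurd hij.symm hd13
            | exact absurd hij.symm hd23
      have hbij : Function.Bijective ψ :=
        (Fintype.bijective_iff_injective_and_card ψ).mpr ⟨hψinj, by rw [hcardE]; rfl⟩
      set e : Fin 3 ≃ (K →ₐ[ℚ] ℂ) := Equiv.ofBijective ψ hbij with he
      have hEM : Algebra.embeddingsMatrixReindex ℚ ℂ ⇑B e = Mat.map (algebraMap ℝ ℂ) := by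
        ext i j
        rw [Algebra.embeddingsMatrixReindex, Matrix.reindex_apply, Matrix.submatrix_apply,
          Equiv.symm_symm, Equiv.refl_symm, Equiv.refl_apply, Algebra.embeddingsMatrix_apply,
          Matrix.map_apply, hBcoe]
        show (ψ j) (bvec i) = algebraMap ℝ ℂ (Mat i j)
        fin_cases j <;>
          simp [hψ, hr, hMat, RingHom.equivRatAlgHom, RingHom.toRatAlgHom, hφx (bvec i)]
      have hMatdet : Mat.det ≠ 0 := by
        intro h
        apply detstep e
        have hmd := RingHom.map_det (algebraMap ℝ ℂ) Mat
        rw [RingHom.mapMatrix_apply] at hmd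
        rw [hEM, ← hmd, h, map_zero]
      refine ⟨indstep hMatdet, ?_, ?_⟩
      · -- norm bound
        have hs : ∀ s : K →+* ℝ, |s α| ≤ mahlerMeasureAlg α := by
          intro s
          have := norm_embed_le_mahler α (Complex.ofRealHom.comp s)
          simpa [Complex.norm_real, Real.norm_eq_abs] using this
        rw [EuclideanSpace.norm_eq]
        have hsum : ∑ i, ‖(φ α) i‖ ^ 2 ≤ 3 * mahlerMeasureAlg α ^ 2 := by
          rw [hφx α, Fin.sum_univ_three]
          simp only [Matrix.cons_val_zero, Matrix.cons_val_one, Matrix.head_cons,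
            Matrix.cons_val_two, Matrix.tail_cons, Real.norm_eq_abs, sq_abs]
          have e1 : (σ₁ α)^2 ≤ mahlerMeasureAlg α ^ 2 := by
            rw [← sq_abs]; exact pow_le_pow_left₀ (abs_nonneg _) (hs σ₁) 2
          have e2 : (σ₂ α)^2 ≤ mahlerMeasureAlg α ^ 2 := by
            rw [← sq_abs]; exact pow_le_pow_left₀ (abs_nonneg _) (hs σ₂) 2
          have e3 : (σ₃ α)^2 ≤ mahlerMeasureAlg α ^ 2 := by
            rw [← sq_abs]; exact pow_le_pow_left₀ (abs_nonneg _) (hs σ₃) 2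
          linarith
        calc Real.sqrt (∑ i, ‖(φ α) i‖ ^ 2) ≤ Real.sqrt (3 * mahlerMeasureAlg α ^ 2) :=
              Real.sqrt_le_sqrt hsum
          _ = Real.sqrt 3 * mahlerMeasureAlg α := by
              rw [Real.sqrt_mul (by norm_num : (0:ℝ) ≤ 3), Real.sqrt_sq hMv0]
          _ = Real.sqrt f * mahlerMeasureAlg α := by rw [hf]
      · -- decomposition
        ext j
        simp only [hβ₁, hβ₂, hβ₃, PiLp.add_apply, PiLp.smul_apply, smul_eq_mul,
          hφx, hα, map_add, map_mul, map_intCast, map_one]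
        fin_cases j <;> simp <;> ring
    · -- one complex place case
      have hcomps : (starRingEnd ℂ).comp τ ≠ τ := by
        intro h
        have := congrArg (fun g => (g x₀).im) h
        simp only [RingHom.coe_comp, Function.comp_apply, Complex.conj_im] at this
        exact hx₀ (by linarith)
      set ψ1 : K →ₐ[ℚ] ℂ := (RingHom.equivRatAlgHom K ℂ) (Complex.ofRealHom.comp σ) with hψ1
      set ψ2 : K →ₐ[ℚ] ℂ := (RingHom.equivRatAlgHom K ℂ) τ with hψ2
      set ψ3 : K →ₐ[ℚ] ℂ := (RingHom.equivRatAlgHom K ℂ) ((starRingEnd ℂ).comp τ) with hψ3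
      have happ : ∀ (g : K →+* ℂ) (x : K), (RingHom.equivRatAlgHom K ℂ g : K →ₐ[ℚ] ℂ) x = g x :=
        fun g x => rfl
      have hd12 : ψ1 ≠ ψ2 := by
        intro h
        have := congrArg (fun g : K →ₐ[ℚ] ℂ => (g x₀).im) h
        simp only [hψ1, hψ2, happ] at this
        simp only [RingHom.coe_comp, Function.comp_apply, Complex.ofRealHom_eq_coe,
          Complex.ofReal_im] at this
        exact hx₀ this.symm
      have hd13 : ψ1 ≠ ψ3 := by
        intro h
        have := congrArg (fun g : K →ₐ[ℚ] ℂ => (g x₀).im) h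
        simp only [hψ1, hψ3, happ] at this
        simp only [RingHom.coe_comp, Function.comp_apply, Complex.ofRealHom_eq_coe,
          Complex.ofReal_im, Complex.conj_im] at this
        exact hx₀ (by linarith [this])
      have hd23 : ψ2 ≠ ψ3 := by
        intro h
        apply hcomps
        have := (RingHom.equivRatAlgHom K ℂ).injective (hψ2 ▸ hψ3 ▸ h)
        exact this.symm
      set ψ : Fin 3 → (K →ₐ[ℚ] ℂ) := ![ψ1, ψ2, ψ3] with hψ
      have hψinj : Function.Injective ψ := by
        intro i j hij
        fin_cases i <;> fin_cases j <;>
          simp only [hψ, Matrix.cons_val_zero, Matrix.cons_val_one, Matrix.head_cons,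
            Matrix.cons_val_two, Matrix.tail_cons, Fin.mk_zero, Fin.mk_one] at hij ⊢ <;>
          first
            | rfl
            | exact absurd hij hd12
            | exact absurd hij hd13
            | exact absurd hij hd23
            | exact absurd hij.symm hd12
            | exact absurd hij.symm hd13
            | exact absurd hij.symm hd23
      have hbij : Function.Bijective ψ :=
        (Fintype.bijective_iff_injective_and_card ψ).mpr ⟨hψinj, by rw [hcardE]; rfl⟩
      set e : Fin 3 ≃ (K →ₐ[ℚ] ℂ) := Equiv.ofBijective ψ hbij with he
      set P : Matrix (Fin 3) (Fin 3) ℂ :=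
        Matrix.of ![![1,0,0], ![0,1,1], ![0,Complex.I,-Complex.I]] with hP
      have hEM : Algebra.embeddingsMatrixReindex ℚ ℂ ⇑B e = (Mat.map (algebraMap ℝ ℂ)) * P := by
        ext i j
        rw [Algebra.embeddingsMatrixReindex, Matrix.reindex_apply, Matrix.submatrix_apply,
          Equiv.symm_symm, Equiv.refl_symm, Equiv.refl_apply, Algebra.embeddingsMatrix_apply,
          hBcoe, Matrix.mul_apply]
        show (ψ j) (bvec i) = _
        rw [Fin.sum_univ_three]
        fin_cases j
        · simp [hψ, hψ1, happ, hP, hMat, hφx (bvec i), RingHom.equivRatAlgHom,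
            RingHom.toRatAlgHom, Matrix.vecHead, Matrix.vecTail]
        · simp [hψ, hψ2, happ, hP, hMat, hφx (bvec i), RingHom.equivRatAlgHom,
            RingHom.toRatAlgHom, Matrix.vecHead, Matrix.vecTail]
          try first
            | exact (Complex.re_add_im _).symm
            | (apply Complex.ext <;> simp)
        · simp [hψ, hψ3, happ, hP, hMat, hφx (bvec i), RingHom.equivRatAlgHom,
            RingHom.toRatAlgHom, Matrix.vecHead, Matrix.vecTail]
          try first
            | exact (Complex.re_add_im _).symm
            | (apply Complex.ext <;> simp)
      have hPdet : P.det = -2 * Complex.I := by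
        rw [hP, Matrix.det_fin_three]
        simp [Matrix.of_apply]
        ring
      have hMatdet : Mat.det ≠ 0 := by
        intro h
        apply detstep e
        have hmd := RingHom.map_det (algebraMap ℝ ℂ) Mat
        rw [RingHom.mapMatrix_apply] at hmd
        rw [hEM, Matrix.det_mul, ← hmd, h, map_zero, zero_mul]
      refine ⟨indstep hMatdet, ?_, ?_⟩
      · -- norm bound
        have hsigma : |σ α| ≤ mahlerMeasureAlg α := by
          have := norm_embed_le_mahler α (Complex.ofRealHom.comp σ)
          simpa [Complex.norm_real, Real.norm_eq_abs] using this
        have htau : ‖τ α‖ ≤ mahlerMeasureAlg α := norm_embed_le_mahler α τ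
        rw [EuclideanSpace.norm_eq]
        have hsum : ∑ i, ‖(φ α) i‖ ^ 2 ≤ 2 * mahlerMeasureAlg α ^ 2 := by
          rw [hφx α, Fin.sum_univ_three]
          simp only [Matrix.cons_val_zero, Matrix.cons_val_one, Matrix.head_cons,
            Matrix.cons_val_two, Matrix.tail_cons, Real.norm_eq_abs, sq_abs]
          have e1 : (σ α)^2 ≤ mahlerMeasureAlg α ^ 2 := by
            rw [← sq_abs]; exact pow_le_pow_left₀ (abs_nonneg _) hsigma 2
          have e2 : (τ α).re^2 + (τ α).im^2 ≤ mahlerMeasureAlg α ^ 2 := by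
            have hh : (τ α).re^2 + (τ α).im^2 = ‖τ α‖^2 := by
              rw [Complex.sq_norm, Complex.normSq_apply]; ring
            rw [hh]
            exact pow_le_pow_left₀ (norm_nonneg _) htau 2
          linarith
        calc Real.sqrt (∑ i, ‖(φ α) i‖ ^ 2) ≤ Real.sqrt (2 * mahlerMeasureAlg α ^ 2) :=
              Real.sqrt_le_sqrt hsum
          _ = Real.sqrt 2 * mahlerMeasureAlg α := by
              rw [Real.sqrt_mul (by norm_num : (0:ℝ) ≤ 2), Real.sqrt_sq hMv0]
          _ = Real.sqrt f * mahlerMeasureAlg α := by rw [hf]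
      · -- decomposition
        ext j
        simp only [hβ₁, hβ₂, hβ₃, PiLp.add_apply, PiLp.smul_apply, smul_eq_mul,
          hφx, hα, map_add, map_mul, map_intCast, map_one]
        fin_cases j <;>
          simp [Complex.add_re, Complex.mul_re, Complex.add_im, Complex.mul_im] <;> ring
  -- final assembly
  have hC : mahlerMeasureAlg α ≤ C := le_of_lt hM
  have hsf : (0:ℝ) ≤ Real.sqrt f := Real.sqrt_nonneg f
  have hnrm2 : ‖φ α‖ ≤ Real.sqrt f * C :=
    le_trans hnrm (mul_le_mul_of_nonneg_left hC hsf)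
  have hfin := gs_bounds β₁ β₂ β₃ β₁s β₂s β₃s μ21 μ31 μ32 hμ21 hμ31 hμ32 hgs1 hgs2 hgs3
    hb21 hb31 hb32 hind (a:ℝ) (b:ℝ) (c:ℝ) (Real.sqrt f * C) (by rw [← hphiα]; exact hnrm2)
  exact ⟨hfin.1, hfin.2.1, hfin.2.2⟩
end
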